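/- arXiv:0807.2960 — 6 statements merged into one kernel-verified Lean document; each statement's English description precedes it below -/
import Mathlib

section
/- Let (w_n) be a positive sequence in GS(w*) with w* > -1, and set γ_n = w_n / (∑_{k=1}^n w_k). Then lim_{n→∞} n γ_n = 1 + w*. -/
open Filter Finset

def GS (γ : ℝ) (v : ℕ → ℝ) : Prop :=
  (∀ᶠ n in atTop, 0 < v n) ∧
  Tendsto (fun n : ℕ => (n : ℝ) * (1 - v (n - 1) / v n)) atTop (nhds γ)

lemma harm_tail (N : ℕ) :
    Tendsto (fun m => ∑ i ∈ range m, 1/((N:ℝ)+i+1)) atTop atTop := by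
  have h := Real.tendsto_sum_range_one_div_nat_succ_atTop
  have h2 : Tendsto (fun m => (1/((N:ℝ)+1)) * ∑ i ∈ range m, (1:ℝ)/((i:ℝ)+1)) atTop atTop :=
    h.const_mul_atTop (by positivity)
  refine tendsto_atTop_mono (fun m => ?_) h2
  rw [Finset.mul_sum]
  refine Finset.sum_le_sum fun i _ => ?_
  rw [div_mul_div_comm, one_mul]
  refine one_div_le_one_div_of_le (by positivity) ?_
  have hi : (0:ℝ) ≤ (i:ℝ) := Nat.cast_nonneg i
  have hN : (0:ℝ) ≤ (N:ℝ) := Nat.cast_nonneg N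
  nlinarith

lemma decay (e : ℕ → ℝ) (β : ℝ) (hβ : 0 < β) (N : ℕ)
    (h0 : ∀ n, N ≤ n → 0 ≤ e n)
    (hstep : ∀ n, N ≤ n → e (n+1) ≤ (1 - β/((n:ℝ)+1)) * e n) :
    Tendsto e atTop (nhds 0) := by
  have key : ∀ m, e (N+m) ≤ e N * Real.exp (-β * ∑ i ∈ range m, 1/((N:ℝ)+i+1)) := by
    intro m
    induction m with
    | zero => simp
    | succ m ih =>
      have hx : (0:ℝ) < (N:ℝ)+m+1 := by positivity
      have h1 : e (N+m+1) ≤ (1 - β/((N:ℝ)+m+1)) * e (N+m) := by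
        have := hstep (N+m) (Nat.le_add_right _ _)
        push_cast at this
        convert this using 3 <;> ring
      have h2 : (1 - β/((N:ℝ)+m+1)) * e (N+m) ≤ Real.exp (-(β/((N:ℝ)+m+1))) * e (N+m) := by
        refine mul_le_mul_of_nonneg_right ?_ (h0 _ (Nat.le_add_right _ _))
        have := Real.add_one_le_exp (-(β/((N:ℝ)+m+1)))
        linarith
      have h3 : Real.exp (-(β/((N:ℝ)+m+1))) * e (N+m) ≤
          Real.exp (-(β/((N:ℝ)+m+1))) * (e N * Real.exp (-β * ∑ i ∈ range m, 1/((N:ℝ)+i+1))) :=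
        mul_le_mul_of_nonneg_left ih (Real.exp_pos _).le
      have h4 : Real.exp (-(β/((N:ℝ)+m+1))) * (e N * Real.exp (-β * ∑ i ∈ range m, 1/((N:ℝ)+i+1)))
          = e N * Real.exp (-β * ∑ i ∈ range (m+1), 1/((N:ℝ)+i+1)) := by
        rw [Finset.sum_range_succ]
        set S := ∑ i ∈ range m, 1/((N:ℝ)+i+1) with hS
        rw [mul_add, Real.exp_add, neg_mul, mul_one_div]
        ring
      calc e (N+(m+1)) = e (N+m+1) := by ring_nf
        _ ≤ _ := h1
        _ ≤ _ := h2
        _ ≤ _ := h3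
        _ = _ := h4
  have hg : Tendsto (fun n => e N * Real.exp (-β * ∑ i ∈ range (n - N), 1/((N:ℝ)+i+1)))
      atTop (nhds 0) := by
    have hsub : Tendsto (fun n : ℕ => n - N) atTop atTop := tendsto_sub_atTop_nat N
    have hs : Tendsto (fun n : ℕ => ∑ i ∈ range (n - N), 1/((N:ℝ)+i+1)) atTop atTop :=
      (harm_tail N).comp hsub
    have h1 : Tendsto (fun x : ℝ => β * x) atTop atTop :=
      Tendsto.const_mul_atTop hβ tendsto_id
    have h2 : Tendsto (fun x : ℝ => -β * x) atTop atBot := by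
      simpa [neg_mul] using tendsto_neg_atBot_iff.mpr h1
    have hexp : Tendsto (fun x : ℝ => Real.exp (-β * x)) atTop (nhds 0) :=
      Real.tendsto_exp_atBot.comp h2
    have := (hexp.comp hs).const_mul (e N)
    simpa using this
  refine squeeze_zero' ?_ ?_ hg
  · filter_upwards [eventually_ge_atTop N] with n hn using h0 n hn
  · filter_upwards [eventually_ge_atTop N] with n hn
    have := key (n - N)
    rwa [Nat.add_sub_cancel' hn] at this

lemma key (t c : ℕ → ℝ) (α : ℝ) (hα : 0 < α)
    (hc : Tendsto (fun n : ℕ => (n:ℝ) * (1 - c n)) atTop (nhds α))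
    (hrec : ∀ n, 2 ≤ n → t n = c n * t (n-1) + 1/n)
    (ht : ∀ᶠ n in atTop, 0 < t n) :
    Tendsto t atTop (nhds (1/α)) := by
  have hc1 : Tendsto c atTop (nhds 1) := by
    have h0 : Tendsto (fun n : ℕ => ((n:ℝ) * (1 - c n)) * (1/n)) atTop (nhds (α * 0)) :=
      hc.mul tendsto_one_div_atTop_nhds_zero_nat
    have h1 : Tendsto (fun n : ℕ => 1 - c n) atTop (nhds 0) := by
      rw [mul_zero] at h0
      refine h0.congr' ?_
      filter_upwards [eventually_ge_atTop 1] with n hn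
      have hn0 : ((n:ℝ)) ≠ 0 := Nat.cast_ne_zero.mpr (by omega)
      field_simp
    have h2 : Tendsto (fun n : ℕ => 1 - (1 - c n)) atTop (nhds (1 - 0)) :=
      Tendsto.sub tendsto_const_nhds h1
    simpa using h2
  rw [tendsto_order]
  constructor
  · -- lower bound: ∀ a < 1/α, eventually a < t n
    intro a ha
    rcases le_or_gt a 0 with h | h
    · filter_upwards [ht] with n hn; linarith
    · have hα2 : α < 1/a := by
        rw [lt_div_iff₀ h]
        have := (lt_div_iff₀ hα).mp ha
        linarith
      set B := (α + 1/a)/2 with hBdef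
      have hB0 : 0 < B := by positivity
      have hαB : α < B := by
        have : 0 < 1/a := by positivity
        simp only [hBdef]; linarith
      have haB : a < 1/B := by
        rw [lt_div_iff₀ hB0]
        have h1 : a * (1/a) = 1 := mul_one_div_cancel h.ne'
        have h2 : a * α < 1 := by
          have := (lt_div_iff₀ hα).mp ha; linarith [mul_comm a α]
        simp only [hBdef]
        nlinarith
      obtain ⟨N, hN⟩ := eventually_atTop.1
        (((hc.eventually_lt_const hαB).and (hc.eventually_const_lt (half_lt_self hα))).and
          (((hc1.eventually_const_lt (by norm_num : (0:ℝ) < 1)).and ht).and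
            (eventually_ge_atTop 2)))
      set f : ℕ → ℝ := fun n => max (1/B - t n) 0 with hfdef
      have hf : Tendsto f atTop (nhds 0) := by
        refine decay f (α/2) (by positivity) N (fun n _ => le_max_right _ _) ?_
        intro n hn
        obtain ⟨⟨hup, hlo⟩, ⟨hcn, htn⟩, hn2⟩ := hN (n+1) (by omega)
        push_cast at hup hlo
        have hx : (0:ℝ) < (n:ℝ)+1 := by positivity
        have hcn0 : (0:ℝ) ≤ c (n+1) := hcn.le
        have hcle : c (n+1) ≤ 1 - (α/2)/((n:ℝ)+1) := by
          have hd : (α/2)/((n:ℝ)+1) < 1 - c (n+1) := (div_lt_iff₀ hx).mpr (by linarith)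
          linarith
        have hrecn : t (n+1) = c (n+1) * t n + 1/((n:ℝ)+1) := by
          have := hrec (n+1) hn2
          simpa using this
        have hB1 : (1 - c (n+1))/B ≤ 1/((n:ℝ)+1) := by
          rw [div_le_iff₀ hB0, one_div_mul_eq_div]
          have : (1 - c (n+1)) < B/((n:ℝ)+1) := by
            rw [lt_div_iff₀ hx]; linarith [mul_comm (1 - c (n+1)) ((n:ℝ)+1)]
          linarith
        have hA : 1/B - t (n+1) ≤ c (n+1) * (1/B - t n) := by
          rw [hrecn]
          have heq : 1/B - (c (n+1) * t n + 1/((n:ℝ)+1)) =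
              c (n+1) * (1/B - t n) + ((1 - c (n+1))/B - 1/((n:ℝ)+1)) := by
            field_simp; ring
          rw [heq]; linarith
        have hC : c (n+1) * (1/B - t n) ≤ c (n+1) * f n :=
          mul_le_mul_of_nonneg_left (le_max_left _ _) hcn0
        have hD : c (n+1) * f n ≤ (1 - (α/2)/((n:ℝ)+1)) * f n :=
          mul_le_mul_of_nonneg_right hcle (le_max_right _ _)
        have hpos : 0 ≤ (1 - (α/2)/((n:ℝ)+1)) * f n :=
          mul_nonneg (le_trans hcn0 hcle) (le_max_right _ _)
        exact max_le (by push_cast; linarith) hpos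
      have := hf.eventually_lt_const (show (0:ℝ) < 1/B - a by linarith)
      filter_upwards [this] with n hn
      have : 1/B - t n ≤ f n := le_max_left _ _
      linarith
  · -- upper bound: ∀ b > 1/α, eventually t n < b
    intro b hb
    have hb0 : 0 < b := lt_trans (by positivity) hb
    set β := (1/b + α)/2 with hβdef
    have hβ0 : 0 < β := by positivity
    have h1b : 1/b < α := by
      rw [div_lt_iff₀ hb0]
      have := (div_lt_iff₀ hα).mp hb
      linarith
    have hβα : β < α := by simp only [hβdef]; linarith
    have h1β : 1/β < b := by
      rw [div_lt_iff₀ hβ0]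
      have h1 : b * (1/b) = 1 := mul_one_div_cancel hb0.ne'
      simp only [hβdef]
      nlinarith
    obtain ⟨N, hN⟩ := eventually_atTop.1
      ((hc.eventually_const_lt hβα).and
        (((hc1.eventually_const_lt (by norm_num : (0:ℝ) < 1)).and ht).and
          (eventually_ge_atTop 2)))
    set e : ℕ → ℝ := fun n => max (t n - 1/β) 0 with hedef
    have he : Tendsto e atTop (nhds 0) := by
      refine decay e β hβ0 N (fun n _ => le_max_right _ _) ?_
      intro n hn
      obtain ⟨hlo, ⟨hcn, htn⟩, hn2⟩ := hN (n+1) (by omega)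
      push_cast at hlo
      have hx : (0:ℝ) < (n:ℝ)+1 := by positivity
      have hcn0 : (0:ℝ) ≤ c (n+1) := hcn.le
      have hcle : c (n+1) ≤ 1 - β/((n:ℝ)+1) := by
        have hd : β/((n:ℝ)+1) < 1 - c (n+1) := (div_lt_iff₀ hx).mpr (by linarith)
        linarith
      have hrecn : t (n+1) = c (n+1) * t n + 1/((n:ℝ)+1) := by
        have := hrec (n+1) hn2
        simpa using this
      have hB1 : 1/((n:ℝ)+1) ≤ (1 - c (n+1))/β := by
        rw [le_div_iff₀ hβ0, one_div_mul_eq_div]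
        have : β/((n:ℝ)+1) < 1 - c (n+1) := (div_lt_iff₀ hx).mpr (by linarith)
        linarith
      have hA : t (n+1) - 1/β ≤ c (n+1) * (t n - 1/β) := by
        rw [hrecn]
        have heq : c (n+1) * t n + 1/((n:ℝ)+1) - 1/β =
            c (n+1) * (t n - 1/β) + (1/((n:ℝ)+1) - (1 - c (n+1))/β) := by
          field_simp; ring
        rw [heq]; linarith
      have hC : c (n+1) * (t n - 1/β) ≤ c (n+1) * e n :=
        mul_le_mul_of_nonneg_left (le_max_left _ _) hcn0
      have hD : c (n+1) * e n ≤ (1 - β/((n:ℝ)+1)) * e n :=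
        mul_le_mul_of_nonneg_right hcle (le_max_right _ _)
      have hpos : 0 ≤ (1 - β/((n:ℝ)+1)) * e n :=
        mul_nonneg (le_trans hcn0 hcle) (le_max_right _ _)
      exact max_le (by push_cast; linarith) hpos
    have := he.eventually_lt_const (show (0:ℝ) < b - 1/β by linarith)
    filter_upwards [this] with n hn
    have : t n - 1/β ≤ e n := le_max_left _ _
    linarith

theorem stmt_1 (w : ℕ → ℝ) (wstar : ℝ) (hpos : ∀ n, 1 ≤ n → 0 < w n)
    (hw : GS wstar w) (hwstar : -1 < wstar)
    (γ : ℕ → ℝ) (hγ : ∀ n, γ n = w n / ∑ k ∈ Icc 1 n, w k) :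
    Tendsto (fun n : ℕ => (n : ℝ) * γ n) atTop (nhds (1 + wstar)) := by
  obtain ⟨-, hwt⟩ := hw
  have hα : 0 < 1 + wstar := by linarith
  set S : ℕ → ℝ := fun n => ∑ k ∈ Icc 1 n, w k with hSdef
  have hS : ∀ n, 1 ≤ n → 0 < S n := fun n hn =>
    Finset.sum_pos (fun k hk => hpos k (Finset.mem_Icc.mp hk).1)
      ⟨1, Finset.mem_Icc.mpr ⟨le_refl 1, hn⟩⟩
  set t : ℕ → ℝ := fun n => S n / ((n:ℝ) * w n) with htdef
  set c : ℕ → ℝ := fun n => (1 - 1/(n:ℝ)) * (w (n-1) / w n) with hcdef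
  have hr : Tendsto (fun n : ℕ => w (n-1) / w n) atTop (nhds 1) := by
    have h0 : Tendsto (fun n : ℕ => ((n:ℝ) * (1 - w (n-1) / w n)) * (1/n)) atTop
        (nhds (wstar * 0)) := hwt.mul tendsto_one_div_atTop_nhds_zero_nat
    have h1 : Tendsto (fun n : ℕ => 1 - w (n-1) / w n) atTop (nhds 0) := by
      rw [mul_zero] at h0
      refine h0.congr' ?_
      filter_upwards [eventually_ge_atTop 1] with n hn
      have hn0 : ((n:ℝ)) ≠ 0 := Nat.cast_ne_zero.mpr (by omega)
      field_simp
    have h2 : Tendsto (fun n : ℕ => 1 - (1 - w (n-1) / w n)) atTop (nhds (1 - 0)) :=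
      Tendsto.sub tendsto_const_nhds h1
    simpa using h2
  have hc : Tendsto (fun n : ℕ => (n:ℝ) * (1 - c n)) atTop (nhds (1 + wstar)) := by
    have h0 : Tendsto (fun n : ℕ => ((n:ℝ) * (1 - w (n-1) / w n)) + w (n-1) / w n) atTop
        (nhds (wstar + 1)) := hwt.add hr
    rw [add_comm] at h0
    refine h0.congr' ?_
    filter_upwards [eventually_ge_atTop 1] with n hn
    have hn0 : ((n:ℝ)) ≠ 0 := Nat.cast_ne_zero.mpr (by omega)
    have hw1 : w n ≠ 0 := (hpos n hn).ne'
    simp only [hcdef]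
    field_simp
    ring
  have hrec : ∀ n, 2 ≤ n → t n = c n * t (n-1) + 1/n := by
    intro n hn
    have hn1 : 1 ≤ n - 1 := by omega
    have hSucc : S n = S (n-1) + w n := by
      have he : n = (n-1) + 1 := by omega
      rw [hSdef]
      simp only []
      conv_lhs => rw [he]
      rw [Finset.sum_Icc_succ_top (by omega : 1 ≤ (n-1) + 1)]
      rw [← he]
    have hw1 : w n ≠ 0 := (hpos n (by omega)).ne'
    have hw2 : w (n-1) ≠ 0 := (hpos (n-1) hn1).ne'
    have hn0 : ((n:ℝ)) ≠ 0 := Nat.cast_ne_zero.mpr (by omega)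
    have hcast : ((n-1:ℕ):ℝ) = (n:ℝ) - 1 := by
      have := Nat.cast_sub (show 1 ≤ n by omega) (R := ℝ)
      simpa using this
    have hn1' : ((n:ℝ)) - 1 ≠ 0 := by
      have : (2:ℝ) ≤ (n:ℝ) := by exact_mod_cast hn
      linarith
    simp only [htdef, hcdef, hcast]
    rw [hSucc]
    field_simp
  have ht : ∀ᶠ n in atTop, 0 < t n := by
    filter_upwards [eventually_ge_atTop 1] with n hn
    have := hS n hn
    have hwn := hpos n hn
    have : (0:ℝ) < (n:ℝ) := by exact_mod_cast Nat.lt_of_lt_of_le Nat.zero_lt_one hn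
    positivity
  have hmain := key t c (1 + wstar) hα hc hrec ht
  have h2 : Tendsto (fun n => (t n)⁻¹) atTop (nhds (1/(1 + wstar))⁻¹) :=
    hmain.inv₀ (by positivity)
  rw [one_div, inv_inv] at h2
  refine h2.congr' ?_
  filter_upwards [eventually_ge_atTop 1] with n hn
  have hSn := hS n hn
  have hwn := hpos n hn
  have hn0 : (0:ℝ) < (n:ℝ) := by exact_mod_cast Nat.lt_of_lt_of_le Nat.zero_lt_one hn
  simp only [htdef, hγ n]
  rw [inv_div]
  field_simp
  exact (div_self hSn.ne').symm
end

section
/- Let (w_n) be a positive sequence in GS(w*) with w* > -1, and set γ_n = w_n / (∑_{k=1}^n w_k). Then the sequence of partial sums (∑_{k=1}^n w_k) belongs to GS(1 + w*), and consequently (γ_n) belongs to GS(-1). -/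
open Filter Finset


lemma harmonic_shift_unbounded (N : ℕ) (C : ℝ) :
    ∃ k, C < ∑ j ∈ range k, (1:ℝ) / ((N:ℝ) + j + 1) := by
  by_contra h
  push_neg at h
  have key : ∀ k, (∑ j ∈ range k, (1:ℝ)/(j+1)) ≤ ((N:ℝ)+1) * C := by
    intro k
    have h1 : ∀ j ∈ range k, (1:ℝ)/((j:ℝ)+1) ≤ ((N:ℝ)+1) * (1/((N:ℝ)+j+1)) := by
      intro j _
      rw [mul_one_div, div_le_div_iff₀ (by positivity) (by positivity)]
      nlinarith [Nat.cast_nonneg (α := ℝ) N, Nat.cast_nonneg (α := ℝ) j]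
    calc ∑ j ∈ range k, (1:ℝ)/((j:ℝ)+1) ≤ ∑ j ∈ range k, ((N:ℝ)+1) * (1/((N:ℝ)+j+1)) :=
          Finset.sum_le_sum h1
      _ = ((N:ℝ)+1) * ∑ j ∈ range k, (1:ℝ)/((N:ℝ)+j+1) := by rw [Finset.mul_sum]
      _ ≤ ((N:ℝ)+1) * C := by
          exact mul_le_mul_of_nonneg_left (h k) (by positivity)
  obtain ⟨k, hk⟩ := (Real.tendsto_sum_range_one_div_nat_succ_atTop.eventually_gt_atTop
    (((N:ℝ)+1) * C)).exists
  exact absurd (key k) (not_le.mpr hk)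

lemma eventually_abs_le (e : ℕ → ℝ) (c ε : ℝ) (hc : 0 < c) (hc1 : c ≤ 1) (hε : 0 < ε)
    (N : ℕ)
    (h : ∀ n, N ≤ n → |e (n+1)| ≤ (1 - c/((n:ℝ)+1)) * |e n| + c*ε/(2*((n:ℝ)+1))) :
    ∀ᶠ n in atTop, |e n| ≤ ε := by
  have stepA : ∃ M, N ≤ M ∧ |e M| ≤ ε := by
    by_contra hA
    push_neg at hA
    have key : ∀ k, |e (N+k)| ≤ |e N| - (c*ε/2) * ∑ j ∈ range k, (1:ℝ)/((N:ℝ)+j+1) := by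
      intro k
      induction k with
      | zero => simp
      | succ k ih =>
        have hn : N ≤ N + k := Nat.le_add_right _ _
        have h1 := h (N+k) hn
        have h2 : ε < |e (N+k)| := hA _ hn
        have h3 : (0:ℝ) < (N:ℝ)+k+1 := by positivity
        have hfrac : 0 < c / ((N:ℝ)+(k:ℝ)+1) := by positivity
        have hmul : (c/((N:ℝ)+(k:ℝ)+1)) * ε ≤ (c/((N:ℝ)+(k:ℝ)+1)) * |e (N+k)| :=
          mul_le_mul_of_nonneg_left h2.le hfrac.le
        have hcast : ((N + k : ℕ) : ℝ) = (N:ℝ) + (k:ℝ) := by push_cast; ring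
        rw [hcast] at h1
        have step : |e (N+k+1)| ≤ |e (N+k)| - c*ε/(2*((N:ℝ)+(k:ℝ)+1)) := by
          have hexp : (1 - c/((N:ℝ)+(k:ℝ)+1)) * |e (N+k)|
              = |e (N+k)| - (c/((N:ℝ)+(k:ℝ)+1)) * |e (N+k)| := by ring
          rw [hexp] at h1
          have : c*ε/(2*((N:ℝ)+(k:ℝ)+1)) = (c/((N:ℝ)+(k:ℝ)+1)) * ε / 2 := by
            field_simp
          nlinarith
        rw [Finset.sum_range_succ]
        have hNk : N + (k+1) = (N + k) + 1 := by ring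
        rw [hNk]
        calc |e (N+k+1)| ≤ |e (N+k)| - c*ε/(2*((N:ℝ)+(k:ℝ)+1)) := step
          _ ≤ (|e N| - (c*ε/2) * ∑ j ∈ range k, (1:ℝ)/((N:ℝ)+j+1)) - c*ε/(2*((N:ℝ)+(k:ℝ)+1)) := by
              linarith
          _ = |e N| - c*ε/2 * ((∑ j ∈ range k, (1:ℝ)/((N:ℝ)+j+1)) + 1/((N:ℝ)+(k:ℝ)+1)) := by
              field_simp; ring
    obtain ⟨k, hk⟩ := harmonic_shift_unbounded N (|e N| * 2 / (c*ε))
    have h2 : ε < |e (N+k)| := hA _ (Nat.le_add_right _ _)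
    have := key k
    have hce : 0 < c * ε := mul_pos hc hε
    rw [div_lt_iff₀ hce] at hk
    nlinarith
  obtain ⟨M, hMN, hM⟩ := stepA
  have stepB : ∀ k, |e (M+k)| ≤ ε := by
    intro k
    induction k with
    | zero => simpa using hM
    | succ k ih =>
      have hn : N ≤ M + k := le_trans hMN (Nat.le_add_right _ _)
      have h1 := h (M+k) hn
      have h3 : (0:ℝ) < ((M+k:ℕ):ℝ)+1 := by positivity
      have hfr : c/(((M+k:ℕ):ℝ)+1) ≤ 1 := by
        rw [div_le_one h3]
        have : (0:ℝ) ≤ ((M+k:ℕ):ℝ) := Nat.cast_nonneg _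
        linarith
      have hmul : (1 - c/(((M+k:ℕ):ℝ)+1)) * |e (M+k)| ≤ (1 - c/(((M+k:ℕ):ℝ)+1)) * ε :=
        mul_le_mul_of_nonneg_left ih (by linarith)
      have key1 : c*ε/(2*(((M+k:ℕ):ℝ)+1)) ≤ c*ε/(((M+k:ℕ):ℝ)+1) :=
        div_le_div_of_nonneg_left (by positivity) (by positivity) (by linarith)
      have key2 : (1 - c/(((M+k:ℕ):ℝ)+1)) * ε = ε - c*ε/(((M+k:ℕ):ℝ)+1) := by ring
      have hMk : M + (k+1) = (M + k) + 1 := by ring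
      rw [hMk]
      linarith
  filter_upwards [eventually_ge_atTop M] with n hn
  obtain ⟨k, rfl⟩ : ∃ k, n = M + k := ⟨n - M, by omega⟩
  exact stepB k

theorem stmt_2 (w : ℕ → ℝ) (wstar : ℝ) (hpos : ∀ n, 1 ≤ n → 0 < w n)
    (hw : GS wstar w) (hwstar : -1 < wstar)
    (γ : ℕ → ℝ) (hγ : ∀ n, γ n = w n / ∑ k ∈ Icc 1 n, w k) :
    GS (1 + wstar) (fun n => ∑ k ∈ Icc 1 n, w k) ∧ GS (-1) γ := by
  obtain ⟨hwpos, hwt⟩ := hw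
  set S : ℕ → ℝ := fun n => ∑ k ∈ Icc 1 n, w k with hSdef
  have hSpos : ∀ n, 1 ≤ n → 0 < S n := by
    intro n hn
    apply Finset.sum_pos
    · intro k hk; exact hpos k (mem_Icc.mp hk).1
    · exact ⟨1, mem_Icc.mpr ⟨le_refl 1, hn⟩⟩
  have hSrec : ∀ n : ℕ, S (n+1) = S n + w (n+1) := by
    intro n
    exact Finset.sum_Icc_succ_top (by omega) w
  set u : ℕ → ℝ := fun n => w (n-1) / w n with hudef
  set t : ℕ → ℝ := fun n => S n / ((n:ℝ) * w n) with htdef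
  set r : ℕ → ℝ := fun n => ((n:ℝ)-1)/(n:ℝ) * u n with hrdef
  have hwstar' : (0:ℝ) < 1 + wstar := by linarith
  set L : ℝ := 1/(1+wstar) with hLdef
  have hL : L ≠ 0 := by
    rw [hLdef]; positivity
  set e : ℕ → ℝ := fun n => t n - L with hedef
  set δ : ℕ → ℝ := fun n => L * (r n - 1) + 1/(n:ℝ) with hδdef
  have hu : Tendsto (fun n : ℕ => (n:ℝ) * (1 - u n)) atTop (nhds wstar) := hwt
  have hinv : Tendsto (fun n : ℕ => (1:ℝ)/(n:ℝ)) atTop (nhds 0) :=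
    tendsto_one_div_atTop_nhds_zero_nat
  have hu1 : Tendsto u atTop (nhds 1) := by
    have h0 : Tendsto (fun n : ℕ => (1/(n:ℝ)) * ((n:ℝ)*(1 - u n))) atTop (nhds (0 * wstar)) :=
      hinv.mul hu
    rw [zero_mul] at h0
    have h1 : Tendsto (fun n : ℕ => 1 - (1/(n:ℝ)) * ((n:ℝ)*(1-u n))) atTop (nhds (1 - 0)) :=
      tendsto_const_nhds.sub h0
    rw [sub_zero] at h1
    apply h1.congr'
    filter_upwards [eventually_ge_atTop 1] with n hn
    have hn0 : (n:ℝ) ≠ 0 := Nat.cast_ne_zero.mpr (by omega)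
    field_simp
    ring
  have hr : Tendsto (fun n : ℕ => (n:ℝ)*(1 - r n)) atTop (nhds (1 + wstar)) := by
    have h1 : Tendsto (fun n : ℕ => (n:ℝ)*(1-u n) + u n) atTop (nhds (wstar + 1)) :=
      hu.add hu1
    rw [add_comm] at h1
    apply h1.congr'
    filter_upwards [eventually_ge_atTop 1] with n hn
    have hn0 : (n:ℝ) ≠ 0 := Nat.cast_ne_zero.mpr (by omega)
    simp only [hrdef]
    field_simp
    ring
  have hδt : Tendsto (fun n : ℕ => (n:ℝ) * δ n) atTop (nhds 0) := by
    have h1 : Tendsto (fun n : ℕ => -L * ((n:ℝ)*(1 - r n)) + 1) atTop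
        (nhds (-L * (1+wstar) + 1)) := ((hr.const_mul (-L)).add_const 1)
    have h2 : -L * (1+wstar) + 1 = 0 := by
      rw [hLdef]; field_simp; ring
    rw [h2] at h1
    apply h1.congr'
    filter_upwards [eventually_ge_atTop 1] with n hn
    have hn0 : (n:ℝ) ≠ 0 := Nat.cast_ne_zero.mpr (by omega)
    simp only [hδdef]
    field_simp
    ring
  have hrec : ∀ n : ℕ, 1 ≤ n → t (n+1) = r (n+1) * t n + 1/((n:ℝ)+1) := by
    intro n hn
    have hw1 : w n ≠ 0 := (hpos n hn).ne'
    have hw2 : w (n+1) ≠ 0 := (hpos (n+1) (by omega)).ne'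
    have hn0 : (n:ℝ) ≠ 0 := Nat.cast_ne_zero.mpr (by omega)
    have hn1 : ((n:ℝ)+1) ≠ 0 := by positivity
    simp only [htdef, hrdef, hudef, hSrec n, Nat.add_sub_cancel]
    push_cast
    field_simp
    ring
  have herec : ∀ n : ℕ, 1 ≤ n → e (n+1) = r (n+1) * e n + δ (n+1) := by
    intro n hn
    simp only [hedef, hδdef, hrec n hn]
    push_cast
    ring
  set c : ℝ := min ((1+wstar)/2) (1/2) with hcdef
  have hc : 0 < c := lt_min (by linarith) (by norm_num)
  have hc1 : c ≤ 1 := le_trans (min_le_right _ _) (by norm_num)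
  have hclt : c < 1 + wstar := lt_of_le_of_lt (min_le_left _ _) (by linarith)
  have hrc : ∀ᶠ (n : ℕ) in atTop, c < (n:ℝ)*(1 - r n) := hr.eventually_const_lt hclt
  have hrpos : ∀ᶠ (n : ℕ) in atTop, 0 ≤ r n := by
    filter_upwards [eventually_ge_atTop 2] with n hn
    have h1 : 0 < w (n-1) := hpos _ (by omega)
    have h2 : 0 < w n := hpos _ (by omega)
    have h3 : (0:ℝ) ≤ (n:ℝ) - 1 := by
      have : (2:ℝ) ≤ (n:ℝ) := by exact_mod_cast hn
      linarith
    simp only [hrdef, hudef]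
    positivity
  have het : Tendsto e atTop (nhds 0) := by
    rw [NormedAddCommGroup.tendsto_nhds_zero]
    intro ε hε
    have hε2 : 0 < ε/2 := by linarith
    have hδε : ∀ᶠ (n : ℕ) in atTop, |(n:ℝ) * δ n| ≤ c*(ε/2)/2 := by
      have := (NormedAddCommGroup.tendsto_nhds_zero.mp hδt) (c*(ε/2)/2) (by positivity)
      filter_upwards [this] with n hn
      rw [Real.norm_eq_abs] at hn
      exact hn.le
    obtain ⟨N₁, hN₁⟩ := eventually_atTop.mp hrc
    obtain ⟨N₂, hN₂⟩ := eventually_atTop.mp hδε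
    obtain ⟨N₃, hN₃⟩ := eventually_atTop.mp hrpos
    have key : ∀ᶠ n in atTop, |e n| ≤ ε/2 := by
      apply eventually_abs_le e c (ε/2) hc hc1 hε2 (max (max N₁ N₂) (max N₃ 1))
      intro n hn
      have hn1 : 1 ≤ n := le_trans (le_trans (le_max_right _ _) (le_max_right _ _)) hn
      have h1 := hN₁ (n+1) (by omega)
      have h2 := hN₂ (n+1) (by omega)
      have h3 := hN₃ (n+1) (by omega)
      have hcast : ((n+1:ℕ):ℝ) = (n:ℝ)+1 := by push_cast; ring
      rw [hcast] at h1 h2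
      have hpos1 : (0:ℝ) < (n:ℝ)+1 := by positivity
      have hrle : r (n+1) ≤ 1 - c/((n:ℝ)+1) := by
        rw [le_sub_iff_add_le, ← le_sub_iff_add_le']
        rw [div_le_iff₀ hpos1]
        nlinarith
      have hδle : |δ (n+1)| ≤ c*(ε/2)/(2*((n:ℝ)+1)) := by
        have : |((n:ℝ)+1) * δ (n+1)| = ((n:ℝ)+1) * |δ (n+1)| := by
          rw [abs_mul, abs_of_pos hpos1]
        rw [this] at h2
        rw [le_div_iff₀ (by positivity : (0:ℝ) < 2*((n:ℝ)+1))]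
        nlinarith [abs_nonneg (δ (n+1))]
      calc |e (n+1)| = |r (n+1) * e n + δ (n+1)| := by rw [herec n hn1]
        _ ≤ |r (n+1) * e n| + |δ (n+1)| := abs_add_le _ _
        _ = r (n+1) * |e n| + |δ (n+1)| := by rw [abs_mul, abs_of_nonneg h3]
        _ ≤ (1 - c/((n:ℝ)+1)) * |e n| + c*(ε/2)/(2*((n:ℝ)+1)) := by
            have := mul_le_mul_of_nonneg_right hrle (abs_nonneg (e n))
            linarith
    filter_upwards [key] with n hn
    rw [Real.norm_eq_abs]
    linarith
  have ht : Tendsto t atTop (nhds L) := by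
    have h1 : Tendsto (fun n => e n + L) atTop (nhds (0 + L)) := het.add_const L
    rw [zero_add] at h1
    apply h1.congr
    intro n
    simp [hedef]
  have htinv : Tendsto (fun n => (t n)⁻¹) atTop (nhds (1+wstar)) := by
    have := ht.inv₀ hL
    rwa [hLdef, one_div, inv_inv] at this
  have goal1 : GS (1 + wstar) S := by
    constructor
    · filter_upwards [eventually_ge_atTop 1] with n hn
      exact hSpos n hn
    · apply htinv.congr'
      filter_upwards [eventually_ge_atTop 1] with n hn
      obtain ⟨m, rfl⟩ : ∃ m, n = m + 1 := ⟨n - 1, by omega⟩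
      have hw1 : w (m+1) ≠ 0 := (hpos (m+1) (by omega)).ne'
      have hS1 : S (m+1) ≠ 0 := (hSpos (m+1) (by omega)).ne'
      have hm1 : ((m:ℝ)+1) ≠ 0 := by positivity
      simp only [htdef, Nat.add_sub_cancel, inv_div]
      rw [hSrec m] at hS1 ⊢
      push_cast
      field_simp
      ring
  refine ⟨goal1, ?_, ?_⟩
  · filter_upwards [eventually_ge_atTop 1] with n hn
    rw [hγ n]
    exact div_pos (hpos n hn) (hSpos n hn)
  · have hq : Tendsto (fun n => S (n-1) / S n) atTop (nhds 1) := by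
      have h1 : Tendsto (fun n : ℕ => 1 - (1/(n:ℝ)) * (t n)⁻¹) atTop
          (nhds (1 - 0 * (1+wstar))) := tendsto_const_nhds.sub (hinv.mul htinv)
      rw [zero_mul, sub_zero] at h1
      apply h1.congr'
      filter_upwards [eventually_ge_atTop 1] with n hn
      obtain ⟨m, rfl⟩ : ∃ m, n = m + 1 := ⟨n - 1, by omega⟩
      have hw1 : w (m+1) ≠ 0 := (hpos (m+1) (by omega)).ne'
      have hS1 : S (m+1) ≠ 0 := (hSpos (m+1) (by omega)).ne'
      have hm1 : ((m:ℝ)+1) ≠ 0 := by positivity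
      simp only [htdef, Nat.add_sub_cancel, inv_div]
      rw [hSrec m] at hS1 ⊢
      push_cast
      field_simp
      ring
    have hb : Tendsto (fun n => S n / S (n-1)) atTop (nhds 1) := by
      have := hq.inv₀ one_ne_zero
      rw [inv_one] at this
      apply this.congr
      intro n
      rw [inv_div]
    have hcomb : Tendsto (fun n : ℕ => (n:ℝ)*(1-u n) + u n * (-(t n)⁻¹ * (S n / S (n-1))))
        atTop (nhds (wstar + 1 * (-(1+wstar) * 1))) :=
      hu.add (hu1.mul ((htinv.neg).mul hb))
    have hval : wstar + 1 * (-(1+wstar) * 1) = -1 := by ring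
    rw [hval] at hcomb
    apply hcomb.congr'
    filter_upwards [eventually_ge_atTop 2] with n hn
    obtain ⟨m, rfl⟩ : ∃ m, n = m + 2 := ⟨n - 2, by omega⟩
    have hw1 : w (m+1) ≠ 0 := (hpos (m+1) (by omega)).ne'
    have hw2 : w (m+2) ≠ 0 := (hpos (m+2) (by omega)).ne'
    have hS1 : S (m+1) ≠ 0 := (hSpos (m+1) (by omega)).ne'
    have hS2 : S (m+2) ≠ 0 := (hSpos (m+2) (by omega)).ne'
    have hm2 : ((m:ℝ)+2) ≠ 0 := by positivity
    have hstep : (m+2) - 1 = m + 1 := by omega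
    have h22 : S (m+2) = S (m+1) + w (m+2) := hSrec (m+1)
    have e1 : (∑ k ∈ Icc 1 (m+1), w k) = S (m+1) := rfl
    have e2 : (∑ k ∈ Icc 1 (m+2), w k) = S (m+2) := rfl
    rw [hstep, hγ (m+1), hγ (m+2), e1, e2]
    simp only [htdef, hudef, hstep, Nat.add_sub_cancel, inv_div]
    rw [h22] at hS2 ⊢
    push_cast
    field_simp
    ring
end

section
/- Let (w_n) be a positive sequence with (w_n) ∈ GS(w*) and w* > -1. Then lim_{n→∞} n w_n / (∑_{k=1}^n w_k) = 1 + w*. -/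
open Filter Finset
open Asymptotics

theorem stmt_3 (w : ℕ → ℝ) (wstar : ℝ) (hpos : ∀ n, 1 ≤ n → 0 < w n)
    (hw : GS wstar w) (hwstar : -1 < wstar) :
    Tendsto (fun n : ℕ => (n : ℝ) * w n / ∑ k ∈ Icc 1 n, w k) atTop
      (nhds (1 + wstar)) := by
  obtain ⟨-, hlim⟩ := hw
  set ε := (1 + wstar) / 2 with hεdef
  have hεpos : 0 < ε := by rw [hεdef]; linarith
  set F : ℕ → ℝ := fun n => (n : ℝ) * w n with hFdef
  set g : ℕ → ℝ := fun i => w (i + 1) with hgdef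
  set f : ℕ → ℝ := fun i => F (i + 1) - F i - (1 + wstar) * g i with hfdef
  have hgpos : ∀ i, 0 < g i := fun i => hpos (i + 1) (Nat.le_add_left 1 i)
  -- ratio tends to 1
  have hr : Tendsto (fun n : ℕ => w (n - 1) / w n) atTop (nhds 1) := by
    have h1 : Tendsto (fun n : ℕ =>
        1 - (n : ℝ) * (1 - w (n - 1) / w n) * (n : ℝ)⁻¹) atTop (nhds 1) := by
      have h2 := hlim.mul tendsto_inv_atTop_nhds_zero_nat
      have h3 := (tendsto_const_nhds (x := (1 : ℝ)) (f := atTop (α := ℕ))).sub h2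
      simpa using h3
    apply h1.congr'
    filter_upwards [eventually_ge_atTop 1] with n hn
    have hn0 : (n : ℝ) ≠ 0 := Nat.cast_ne_zero.mpr (by omega)
    rw [mul_comm, inv_mul_cancel_left₀ hn0]
    ring
  -- shifted versions
  have hc : Tendsto (fun i : ℕ => ((i + 1 : ℕ) : ℝ) * (1 - w i / w (i + 1)))
      atTop (nhds wstar) := by
    have := hlim.comp (tendsto_add_atTop_nat 1)
    simpa [Function.comp_def] using this
  have hr' : Tendsto (fun i : ℕ => w i / w (i + 1)) atTop (nhds 1) := by
    have := hr.comp (tendsto_add_atTop_nat 1)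
    simpa [Function.comp_def] using this
  -- f / g tends to 0
  have hfg : Tendsto (fun i => f i / g i) atTop (nhds 0) := by
    have key : ∀ i : ℕ, f i / g i =
        ((i + 1 : ℕ) : ℝ) * (1 - w i / w (i + 1)) + w i / w (i + 1) - 1 - wstar := by
      intro i
      have hne : w (i + 1) ≠ 0 := (hgpos i).ne'
      simp only [hfdef, hFdef, hgdef]
      push_cast
      field_simp
      ring
    rw [tendsto_congr key]
    have := ((hc.add hr').sub_const 1).sub_const wstar
    simpa using this
  have hof : f =o[atTop] g := by
    refine (isLittleO_iff_tendsto' ?_).mpr hfg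
    filter_upwards with i hi
    exact absurd hi (hgpos i).ne'
  -- eventual bounds
  have hev : ∀ᶠ i in atTop, |f i| ≤ ε * g i := by
    have := hof.def hεpos
    filter_upwards [this] with i hi
    simpa [Real.norm_eq_abs, abs_of_pos (hgpos i)] using hi
  obtain ⟨N₀, hN₀⟩ := eventually_atTop.mp hev
  set N := max N₀ 1 with hNdef
  have hN : ∀ i, N ≤ i → |f i| ≤ ε * g i := fun i hi => hN₀ i (le_trans (le_max_left _ _) hi)
  have hlow : ∀ i, N ≤ i → ε * g i ≤ F (i + 1) - F i := by
    intro i hi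
    have h1 := abs_le.mp (hN i hi)
    have : (1 + wstar) = 2 * ε := by rw [hεdef]; ring
    simp only [hfdef] at h1
    nlinarith [h1.1, h1.2]
  have hup : ∀ i, N ≤ i → F (i + 1) - F i ≤ 3 * ε * g i := by
    intro i hi
    have h1 := abs_le.mp (hN i hi)
    have : (1 + wstar) = 2 * ε := by rw [hεdef]; ring
    simp only [hfdef] at h1
    nlinarith [h1.1, h1.2]
  -- F is monotone from N on
  have hmono : ∀ m n, N ≤ m → m ≤ n → F m ≤ F n := by
    intro m n hm hmn
    induction n with
    | zero =>
      have h1 : 1 ≤ N := le_max_right _ _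
      omega
    | succ k ih =>
      rcases Nat.lt_or_ge k m with h | h
      · have : m = k + 1 := by omega
        simp [this]
      · have hk := ih (by omega)
        have := hlow k (by omega)
        have := mul_pos hεpos (hgpos k)
        linarith
  have hFNpos : 0 < F N := by
    have : 1 ≤ N := le_max_right _ _
    exact mul_pos (by exact_mod_cast this) (hpos N this)
  -- harmonic sums
  have hharm : Tendsto (fun n : ℕ => ∑ i ∈ range n, ((i : ℝ) + 1)⁻¹) atTop atTop := by
    have := Real.tendsto_sum_range_one_div_nat_succ_atTop
    simpa [one_div] using this
  -- F tends to infinity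
  have hFtop : Tendsto F atTop atTop := by
    have hbound : ∀ n, N ≤ n → F N + ε * F N *
        ((∑ i ∈ range n, ((i : ℝ) + 1)⁻¹) - ∑ i ∈ range N, ((i : ℝ) + 1)⁻¹) ≤ F n := by
      intro n hn
      have hF0 : F 0 = 0 := by simp [hFdef]
      have htel : ∑ k ∈ Ico N n, (F (k + 1) - F k) = F n - F N := by
        rw [Finset.sum_Ico_eq_sub _ hn, Finset.sum_range_sub, Finset.sum_range_sub, hF0]
        ring
      have hterm : ∀ k ∈ Ico N n, ε * F N * ((k : ℝ) + 1)⁻¹ ≤ F (k + 1) - F k := by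
        intro k hk
        have hkN : N ≤ k := (mem_Ico.mp hk).1
        have h1 : ε * g k ≤ F (k + 1) - F k := hlow k hkN
        have h2 : F N ≤ F (k + 1) := hmono N (k + 1) le_rfl (by omega)
        have hk1 : (0 : ℝ) < (k : ℝ) + 1 := by positivity
        have h3 : F N / ((k : ℝ) + 1) ≤ g k := by
          rw [div_le_iff₀ hk1]
          have : g k * ((k : ℝ) + 1) = F (k + 1) := by
            simp only [hgdef, hFdef]; push_cast; ring
          linarith [this ▸ h2]
        calc ε * F N * ((k : ℝ) + 1)⁻¹ = ε * (F N / ((k : ℝ) + 1)) := by ring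
          _ ≤ ε * g k := by
              exact mul_le_mul_of_nonneg_left h3 hεpos.le
          _ ≤ F (k + 1) - F k := h1
      have hsum := Finset.sum_le_sum hterm
      rw [htel, ← Finset.mul_sum] at hsum
      have hIco : ∑ k ∈ Ico N n, ((k : ℝ) + 1)⁻¹ =
          (∑ i ∈ range n, ((i : ℝ) + 1)⁻¹) - ∑ i ∈ range N, ((i : ℝ) + 1)⁻¹ := by
        simp only [range_eq_Ico]
        rw [eq_sub_iff_add_eq, add_comm]
        exact Finset.sum_Ico_consecutive _ (Nat.zero_le N) hn
      rw [hIco] at hsum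
      linarith
    have hL : Tendsto (fun n : ℕ => F N + ε * F N *
        ((∑ i ∈ range n, ((i : ℝ) + 1)⁻¹) - ∑ i ∈ range N, ((i : ℝ) + 1)⁻¹))
        atTop atTop := by
      apply tendsto_atTop_add_const_left
      apply Tendsto.const_mul_atTop (mul_pos hεpos hFNpos)
      exact tendsto_atTop_add_const_right _ _ hharm
    exact tendsto_atTop_mono' atTop (eventually_atTop.mpr ⟨N, hbound⟩) hL
  -- S tends to infinity
  set S : ℕ → ℝ := fun n => ∑ i ∈ range n, g i with hSdef
  have hStop : Tendsto S atTop atTop := by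
    have hbound : ∀ n, N ≤ n → (F n - F N) / (3 * ε) ≤ S n := by
      intro n hn
      have hF0 : F 0 = 0 := by simp [hFdef]
      have htel : ∑ k ∈ Ico N n, (F (k + 1) - F k) = F n - F N := by
        rw [Finset.sum_Ico_eq_sub _ hn, Finset.sum_range_sub, Finset.sum_range_sub, hF0]
        ring
      have h1 : F n - F N ≤ ∑ k ∈ Ico N n, 3 * ε * g k := by
        rw [← htel]
        exact Finset.sum_le_sum fun k hk => hup k (mem_Ico.mp hk).1
      have h2 : ∑ k ∈ Ico N n, 3 * ε * g k ≤ ∑ k ∈ range n, 3 * ε * g k := by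
        apply Finset.sum_le_sum_of_subset_of_nonneg
        · rw [range_eq_Ico]; exact Finset.Ico_subset_Ico (Nat.zero_le _) le_rfl
        · intro i _ _
          exact mul_nonneg (by linarith) (hgpos i).le
      have h3 : F n - F N ≤ 3 * ε * S n := by
        rw [hSdef, Finset.mul_sum]
        calc F n - F N ≤ ∑ k ∈ Ico N n, 3 * ε * g k := h1
          _ ≤ ∑ k ∈ range n, 3 * ε * g k := h2
      rw [div_le_iff₀ (by linarith : (0:ℝ) < 3 * ε)]
      linarith
    have hL : Tendsto (fun n => (F n - F N) / (3 * ε)) atTop atTop :=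
      (tendsto_atTop_add_const_right _ _ hFtop).atTop_div_const (by linarith)
    exact tendsto_atTop_mono' atTop (eventually_atTop.mpr ⟨N, hbound⟩) hL
  -- Stolz-Cesaro via sum_range
  have hsum : (fun n => ∑ i ∈ range n, f i) =o[atTop] fun n => ∑ i ∈ range n, g i :=
    hof.sum_range (fun i => (hgpos i).le) hStop
  have hFS : (fun n => F n - (1 + wstar) * S n) =o[atTop] S := by
    apply hsum.congr
    · intro n
      simp only [hfdef, Finset.sum_sub_distrib, Finset.sum_range_sub F, ← Finset.mul_sum,
        hSdef, hFdef]
      push_cast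
      have h := Finset.sum_range_sub (fun x : ℕ => (x:ℝ) * w x) n
      simp only [Nat.cast_add, Nat.cast_one, Nat.cast_zero, zero_mul, sub_zero, add_mul, one_mul, Nat.add_comm _ 1] at h
      rw [← Finset.sum_sub_distrib]
      have h2 : ∑ x ∈ range n, (((x:ℝ) + 1) * w (x + 1) - x * w x) = n * w n := by
        rw [← h]; exact Finset.sum_congr rfl (fun x _ => by ring)
      linarith
    · intro n; rfl
  have htends : Tendsto (fun n => (F n - (1 + wstar) * S n) / S n) atTop (nhds 0) :=
    hFS.tendsto_div_nhds_zero
  have hSpos : ∀ n, 1 ≤ n → 0 < S n := by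
    intro n hn
    exact Finset.sum_pos (fun i _ => hgpos i) (nonempty_range_iff.mpr (by omega))
  have hfinal : Tendsto (fun n => F n / S n) atTop (nhds (1 + wstar)) := by
    rw [← tendsto_sub_nhds_zero_iff]
    apply htends.congr'
    filter_upwards [eventually_ge_atTop 1] with n hn
    have hne : S n ≠ 0 := (hSpos n hn).ne'
    field_simp
  -- identify the goal
  apply hfinal.congr'
  filter_upwards with n
  have : ∑ k ∈ Icc 1 n, w k = S n := by
    rw [hSdef, ← Finset.Ico_add_one_right_eq_Icc, Finset.sum_Ico_eq_sum_range]
    simp [Nat.add_comm]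
    rfl
  rw [this, hFdef]
end

section
/- Let (v_n) ∈ GS(v*), let (γ_n) ∈ GS(-α) be a positive sequence with γ_n → 0 and ∑ γ_n = ∞, with α ∈ (1/2, 1], and let m > 0 satisfy m - v* ξ > 0, where ξ = lim_{n→∞} (n γ_n)^{-1} (assumed to exist in [0,∞)). Set Π_n = ∏_{j=1}^n (1 - γ_j). Then lim_{n→∞} v_n Π_n^m ∑_{k=1}^n Π_k^{-m} γ_k / v_k = 1/(m - v* ξ). -/
open Filter Finset

open Topology

private lemma stolz_aux {a b : ℕ → ℝ} {L : ℝ} (hb : Tendsto b atTop atTop)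
    (hmono : ∀ᶠ n in atTop, b n < b (n + 1))
    (hr : Tendsto (fun n => (a (n + 1) - a n) / (b (n + 1) - b n)) atTop (𝓝 L)) :
    Tendsto (fun n => a n / b n) atTop (𝓝 L) := by
  rw [Metric.tendsto_atTop]
  intro ε hε
  have hε2 : 0 < ε / 2 := by positivity
  obtain ⟨N₁, hN₁⟩ := Metric.tendsto_atTop.mp hr (ε/2) hε2
  obtain ⟨N₂, hN₂⟩ := eventually_atTop.mp hmono
  set N := max N₁ N₂ with hNdef
  have hstep : ∀ n, N ≤ n →
      |a (n+1) - a n - L * (b (n+1) - b n)| ≤ ε/2 * (b (n+1) - b n) := by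
    intro n hn
    have hd : 0 < b (n+1) - b n := sub_pos.mpr (hN₂ n (le_trans (le_max_right _ _) hn))
    have hq := hN₁ n (le_trans (le_max_left _ _) hn)
    rw [Real.dist_eq] at hq
    have he : a (n+1) - a n - L * (b (n+1) - b n)
        = ((a (n+1) - a n)/(b (n+1) - b n) - L) * (b (n+1) - b n) := by
      field_simp
    rw [he, abs_mul, abs_of_pos hd]
    exact mul_le_mul_of_nonneg_right hq.le hd.le
  have htel : ∀ n, N ≤ n → |a n - a N - L * (b n - b N)| ≤ ε/2 * (b n - b N) := by
    intro n hn
    induction n, hn using Nat.le_induction with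
    | base => simp
    | succ n hn ih =>
      have h1 := hstep n hn
      have e : a (n+1) - a N - L*(b (n+1) - b N)
          = (a n - a N - L*(b n - b N)) + (a (n+1) - a n - L*(b (n+1) - b n)) := by ring
      calc |a (n+1) - a N - L*(b (n+1) - b N)|
          ≤ |a n - a N - L*(b n - b N)| + |a (n+1) - a n - L*(b (n+1) - b n)| := by
            rw [e]; exact abs_add_le _ _
        _ ≤ ε/2*(b n - b N) + ε/2*(b (n+1) - b n) := add_le_add ih h1
        _ = ε/2 * (b (n+1) - b N) := by ring
  have hb0 : ∀ᶠ n in atTop, 0 < b n := hb.eventually_gt_atTop 0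
  have hinv : Tendsto (fun n => (b n)⁻¹) atTop (𝓝 0) := hb.inv_tendsto_atTop
  have hbound : Tendsto (fun n => ε/2 * (1 - b N * (b n)⁻¹) + |a N - L * b N| * (b n)⁻¹)
      atTop (𝓝 (ε/2 * (1 - b N * 0) + |a N - L * b N| * 0)) :=
    (tendsto_const_nhds.mul (tendsto_const_nhds.sub (tendsto_const_nhds.mul hinv))).add
      (tendsto_const_nhds.mul hinv)
  have heq : ε/2 * (1 - b N*0) + |a N - L * b N| * 0 = ε/2 := by ring
  rw [heq] at hbound
  have hlt : ∀ᶠ n in atTop,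
      ε/2 * (1 - b N * (b n)⁻¹) + |a N - L * b N| * (b n)⁻¹ < ε :=
    hbound.eventually (eventually_lt_nhds (by linarith))
  have hev : ∀ᶠ n in atTop, |a n / b n - L| < ε := by
    filter_upwards [hb0, eventually_ge_atTop N, hlt] with n hbn hn hltn
    have key := htel n hn
    have e : a n / b n - L = ((a n - a N - L * (b n - b N)) + (a N - L * b N)) / b n := by
      field_simp; ring
    rw [e]
    calc |((a n - a N - L * (b n - b N)) + (a N - L * b N)) / b n|
        ≤ (|a n - a N - L*(b n - b N)| + |a N - L * b N|) / b n := by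
          rw [abs_div, abs_of_pos hbn]
          gcongr
          exact abs_add_le _ _
      _ ≤ (ε/2*(b n - b N) + |a N - L * b N|)/b n := by gcongr
      _ = ε/2 * (1 - b N*(b n)⁻¹) + |a N - L * b N| * (b n)⁻¹ := by field_simp
      _ < ε := hltn
  obtain ⟨M, hM⟩ := eventually_atTop.mp hev
  exact ⟨M, fun n hn => by rw [Real.dist_eq]; exact hM n hn⟩

theorem stmt_4 (v γ : ℕ → ℝ) (vstar α ξ m : ℝ)
    (hv : GS vstar v) (hγ : GS (-α) γ) (hα : 1/2 < α ∧ α ≤ 1)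
    (hγ01 : ∀ n, 1 ≤ n → γ n ∈ Set.Ioo (0 : ℝ) 1)
    (hγ0 : Tendsto γ atTop (nhds 0))
    (hdiv : Tendsto (fun n => ∑ k ∈ Icc 1 n, γ k) atTop atTop)
    (hξ : 0 ≤ ξ)
    (hξlim : Tendsto (fun n : ℕ => ((n : ℝ) * γ n)⁻¹) atTop (nhds ξ))
    (hm : 0 < m) (hmξ : 0 < m - vstar * ξ) :
    Tendsto
      (fun n : ℕ =>
        v n * (∏ j ∈ Icc 1 n, (1 - γ j)) ^ m *
          ∑ k ∈ Icc 1 n, ((∏ j ∈ Icc 1 k, (1 - γ j)) ^ m)⁻¹ * γ k / v k)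
      atTop (nhds (1 / (m - vstar * ξ))) := by
  have hγp : ∀ n : ℕ, 0 < γ (n + 1) := fun n => (hγ01 (n+1) (Nat.le_add_left 1 n)).1
  have hγl : ∀ n : ℕ, γ (n + 1) < 1 := fun n => (hγ01 (n+1) (Nat.le_add_left 1 n)).2
  have hγs : Tendsto (fun n => γ (n+1)) atTop (𝓝 0) := hγ0.comp (tendsto_add_atTop_nat 1)
  -- the key ratio limit
  have h1 : Tendsto
      (fun n : ℕ => (1 - v (n+1) / v n * (1 - γ (n+1)) ^ m) / γ (n+1))
      atTop (𝓝 (m - vstar * ξ)) := by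
    have h0 : HasDerivAt (fun x : ℝ => 1 - x) (-1) 0 := by
      simpa using (hasDerivAt_id (0:ℝ)).const_sub 1
    have hg : HasDerivAt (fun x : ℝ => (1 - x) ^ m) (-m) 0 := by
      have := h0.rpow_const (p := m) (Or.inl (by norm_num))
      simpa using this
    have hγin : Tendsto (fun n => γ (n+1)) atTop (𝓝[≠] (0:ℝ)) :=
      tendsto_nhdsWithin_of_tendsto_nhds_of_eventually_within _ hγs
        (Eventually.of_forall fun n => Set.mem_compl_singleton_iff.mpr (hγp n).ne')
    have hslope := hasDerivAt_iff_tendsto_slope.mp hg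
    have hA : Tendsto (fun n => (1 - (1 - γ (n+1)) ^ m) / γ (n+1)) atTop (𝓝 m) := by
      have := (hslope.comp hγin).neg
      simp only [Function.comp] at this
      have h2 : Tendsto (fun n => -((((1 - γ (n+1)) ^ m) - 1) / γ (n+1))) atTop (𝓝 (-(-m))) := by
        refine this.congr fun n => ?_
        rw [slope_def_field]
        norm_num [Real.one_rpow]
      simp only [neg_neg] at h2
      refine h2.congr fun n => ?_
      rw [← neg_div, neg_sub]
    have hgc : Tendsto (fun n => (1 - γ (n+1)) ^ m) atTop (𝓝 1) := by
      have := hg.continuousAt.tendsto.comp hγs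
      simpa [Real.one_rpow, Function.comp_def] using this
    have hv2 : Tendsto (fun n : ℕ => ((n : ℝ) + 1) * (1 - v n / v (n+1))) atTop (𝓝 vstar) := by
      have := hv.2.comp (tendsto_add_atTop_nat 1)
      refine this.congr fun n => ?_
      simp only [Function.comp_apply, Nat.add_sub_cancel]
      push_cast
      ring
    have hinv1 : Tendsto (fun n : ℕ => ((n : ℝ) + 1)⁻¹) atTop (𝓝 0) := by
      simpa [one_div] using tendsto_one_div_add_atTop_nhds_zero_nat (𝕜 := ℝ)
    have hsub : Tendsto (fun n : ℕ => 1 - v n / v (n+1)) atTop (𝓝 0) := by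
      have := hv2.mul hinv1
      rw [mul_zero] at this
      refine this.congr fun n => ?_
      rw [mul_comm (((n:ℝ)+1)) _, mul_assoc, mul_inv_cancel₀ (by positivity), mul_one]
    have ht : Tendsto (fun n : ℕ => v n / v (n+1)) atTop (𝓝 1) := by
      have h5 : Tendsto (fun n : ℕ => 1 - (1 - v n / v (n+1))) atTop (𝓝 (1 - 0)) :=
        tendsto_const_nhds.sub hsub
      simpa using h5
    have htne : ∀ᶠ n in atTop, v n / v (n+1) ≠ 0 := ht.eventually_ne one_ne_zero
    have hw : Tendsto (fun n : ℕ => ((n : ℝ) + 1) * (1 - v (n+1) / v n)) atTop (𝓝 (-vstar)) := by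
      have h3 := (hv2.neg).div ht one_ne_zero
      rw [neg_div, div_one] at h3
      refine h3.congr' ?_
      filter_upwards [htne] with n hne
      have hvv : v (n+1) / v n = (v n / v (n+1))⁻¹ := (inv_div _ _).symm
      show -(((n:ℝ)+1) * (1 - v n / v (n+1))) / (v n / v (n+1)) = _
      rw [hvv]
      generalize hx : v n / v (n+1) = t at hne ⊢
      field_simp
      ring
    have hξs : Tendsto (fun n : ℕ => (((n : ℝ) + 1) * γ (n+1))⁻¹) atTop (𝓝 ξ) := by
      have := hξlim.comp (tendsto_add_atTop_nat 1)
      refine this.congr fun n => ?_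
      simp only [Function.comp_apply]
      push_cast
      rfl
    have hB : Tendsto (fun n => (1 - v (n+1) / v n) / γ (n+1)) atTop (𝓝 (-vstar * ξ)) := by
      refine (hw.mul hξs).congr fun n => ?_
      have h4 : ((n:ℝ)+1) ≠ 0 := by positivity
      rw [mul_inv, show ((n:ℝ)+1) * (1 - v (n+1)/v n) * ((((n:ℝ)+1))⁻¹ * (γ (n+1))⁻¹)
          = ((((n:ℝ)+1)) * (((n:ℝ)+1))⁻¹) * ((1 - v (n+1)/v n) * (γ (n+1))⁻¹) from by ring,
        mul_inv_cancel₀ h4, one_mul, ← div_eq_mul_inv]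
    have hfin := hA.add (hgc.mul hB)
    have heq : m + 1 * (-vstar * ξ) = m - vstar * ξ := by ring
    rw [heq] at hfin
    refine hfin.congr fun n => ?_
    rw [← mul_div_assoc, ← add_div]
    congr 1
    ring
  -- abbreviations
  set P : ℕ → ℝ := fun n => ∏ j ∈ Icc 1 n, (1 - γ j) with hPdef
  have hP : ∀ n, 0 < P n := by
    intro n
    simp only [hPdef]
    refine Finset.prod_pos fun j hj => ?_
    have h1j : 1 ≤ j := (Finset.mem_Icc.mp hj).1
    have := (hγ01 j h1j).2
    linarith
  have hPs : ∀ n, P (n+1) = P n * (1 - γ (n+1)) := by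
    intro n
    simp only [hPdef]
    exact Finset.prod_Icc_succ_top (Nat.le_add_left 1 n) _
  have hPm : ∀ n, (0:ℝ) < P n ^ m := fun n => Real.rpow_pos_of_pos (hP n) m
  have hqpos : ∀ n : ℕ, (0:ℝ) < (1 - γ (n+1)) ^ m :=
    fun n => Real.rpow_pos_of_pos (by linarith [hγl n]) m
  have hPmmul : ∀ n, P (n+1) ^ m = P n ^ m * (1 - γ (n+1)) ^ m := by
    intro n
    rw [hPs n, Real.mul_rpow (hP n).le (by linarith [hγl n] : (0:ℝ) ≤ 1 - γ (n+1))]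
  set b : ℕ → ℝ := fun n => (v n * P n ^ m)⁻¹ with hbdef
  set a : ℕ → ℝ := fun n => ∑ k ∈ Icc 1 n, ((P k ^ m)⁻¹ * γ k / v k) with hadef
  have hadiff : ∀ n, a (n+1) - a n = b (n+1) * γ (n+1) := by
    intro n
    simp only [hadef, hbdef]
    rw [Finset.sum_Icc_succ_top (Nat.le_add_left 1 n), mul_inv]
    ring
  have shift : ∀ {p : ℕ → Prop}, (∀ᶠ n in atTop, p n) → (∀ᶠ n in atTop, p (n+1)) :=
    fun h => (tendsto_add_atTop_nat 1).eventually h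
  have hvv : ∀ᶠ n in atTop, 0 < v n ∧ 0 < v (n+1) := hv.1.and (shift hv.1)
  have hbpos : ∀ᶠ n in atTop, 0 < b n ∧ 0 < b (n+1) := by
    filter_upwards [hvv] with n hn
    exact ⟨inv_pos.mpr (mul_pos hn.1 (hPm n)), inv_pos.mpr (mul_pos hn.2 (hPm (n+1)))⟩
  have hEg : ∀ᶠ n in atTop,
      (m - vstar * ξ)/2 < (1 - v (n+1) / v n * (1 - γ (n+1)) ^ m) / γ (n+1) :=
    h1.eventually (eventually_gt_nhds (by linarith))
  have hEγ : ∀ᶠ n in atTop,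
      (m - vstar * ξ)/2 * γ (n+1) ≤ 1 - v (n+1) / v n * (1 - γ (n+1)) ^ m :=
    hEg.mono fun n hn => ((lt_div_iff₀ (hγp n)).mp hn).le
  have hEpos : ∀ᶠ n in atTop, 0 < 1 - v (n+1) / v n * (1 - γ (n+1)) ^ m := by
    filter_upwards [hEγ] with n hn
    have h6 := hγp n
    nlinarith [hmξ]
  have hbdiff : ∀ᶠ n in atTop,
      b (n+1) - b n = b (n+1) * (1 - v (n+1) / v n * (1 - γ (n+1)) ^ m) := by
    filter_upwards [hvv] with n hn
    simp only [hbdef]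
    rw [hPmmul n]
    field_simp [hn.1.ne', hn.2.ne', (hPm n).ne', (hqpos n).ne']
  have hmono : ∀ᶠ n in atTop, b n < b (n+1) := by
    filter_upwards [hbdiff, hEpos, hbpos] with n hd hE hb
    nlinarith [mul_pos hb.2 hE]
  have hr : Tendsto (fun n => (a (n+1) - a n)/(b (n+1) - b n)) atTop
      (𝓝 (1/(m - vstar * ξ))) := by
    have h7 := h1.inv₀ hmξ.ne'
    rw [one_div]
    refine h7.congr' ?_
    filter_upwards [hbdiff, hbpos] with n hd hb
    rw [hadiff n, hd, inv_div, mul_div_mul_left _ _ hb.2.ne']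
  obtain ⟨N, hN⟩ := eventually_atTop.mp (hbpos.and (hmono.and (hbdiff.and hEγ)))
  have hbNle : ∀ n, N ≤ n → b N ≤ b n := by
    intro n hn
    induction n, hn using Nat.le_induction with
    | base => exact le_rfl
    | succ n hn ih => exact ih.trans (hN n hn).2.1.le
  have hbNpos : 0 < b N := (hN N le_rfl).1.1
  have hkey : ∀ n, N ≤ n →
      b N + (m - vstar * ξ)/2 * b N * ((∑ k ∈ Icc 1 n, γ k) - ∑ k ∈ Icc 1 N, γ k) ≤ b n := by
    intro n hn
    induction n, hn using Nat.le_induction with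
    | base => simp
    | succ n hn ih =>
      obtain ⟨hb, hlt, hd, hE⟩ := hN n hn
      have hb1N : b N ≤ b (n+1) := hbNle (n+1) (by omega)
      have hs : ∑ k ∈ Icc 1 (n+1), γ k = (∑ k ∈ Icc 1 n, γ k) + γ (n+1) :=
        Finset.sum_Icc_succ_top (Nat.le_add_left 1 n) _
      have hmul : (m - vstar * ξ)/2 * b N * γ (n+1)
          ≤ b (n+1) * (1 - v (n+1) / v n * (1 - γ (n+1)) ^ m) := by
        calc (m - vstar * ξ)/2 * b N * γ (n+1)
            = b N * ((m - vstar * ξ)/2 * γ (n+1)) := by ring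
          _ ≤ b (n+1) * (1 - v (n+1) / v n * (1 - γ (n+1)) ^ m) :=
            mul_le_mul hb1N hE (mul_nonneg (by linarith) (hγp n).le) (by linarith)
      have expand : (m - vstar * ξ)/2 * b N * ((∑ k ∈ Icc 1 n, γ k) + γ (n+1) - ∑ k ∈ Icc 1 N, γ k)
          = (m - vstar * ξ)/2 * b N * ((∑ k ∈ Icc 1 n, γ k) - ∑ k ∈ Icc 1 N, γ k)
            + (m - vstar * ξ)/2 * b N * γ (n+1) := by ring
      rw [hs, expand]
      linarith [ih, hmul, hd]
  have hSdiv : Tendsto (fun n => b N + (m - vstar * ξ)/2 * b N *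
      ((∑ k ∈ Icc 1 n, γ k) - ∑ k ∈ Icc 1 N, γ k)) atTop atTop := by
    have h8 : Tendsto (fun n => (∑ k ∈ Icc 1 n, γ k) - ∑ k ∈ Icc 1 N, γ k) atTop atTop := by
      simp only [sub_eq_add_neg]
      exact tendsto_atTop_add_const_right _ _ hdiv
    have h9 := h8.const_mul_atTop (mul_pos (by linarith : (0:ℝ) < (m - vstar * ξ)/2) hbNpos)
    exact tendsto_atTop_add_const_left _ _ h9
  have hbtop : Tendsto b atTop atTop :=
    tendsto_atTop_mono' atTop (eventually_atTop.mpr ⟨N, fun n hn => hkey n hn⟩) hSdiv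
  have hfinal := stolz_aux hbtop hmono hr
  refine hfinal.congr fun n => ?_
  simp only [hadef, hbdef, hPdef]
  rw [div_inv_eq_mul, mul_comm]
end

section
/- Let (v_n) ∈ GS(v*), let (γ_n) ∈ GS(-α) with α ∈ (1/2,1], γ_n ∈ (0,1), ∑ γ_n = ∞, and ξ = lim (n γ_n)^{-1} exists in [0,∞) with m - v*ξ > 0 for some m > 0. Then for any positive sequence (α_n) with α_n → 0 and any δ ∈ ℝ, setting Π_n = ∏_{j=1}^n (1 - γ_j), one has lim_{n→∞} v_n Π_n^m [∑_{k=1}^n Π_k^{-m} (γ_k/v_k) α_k + δ] = 0. -/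
open Filter Finset

lemma neg_log_one_sub_le {x : ℝ} (h : |x| ≤ 1/2) :
    -Real.log (1 - x) ≤ x + 2 * x ^ 2 := by
  have hx1 : x ≤ 1/2 := (abs_le.mp h).2
  have hx2 : -(1/2) ≤ x := (abs_le.mp h).1
  have h1 : (0:ℝ) < 1 - x := by linarith
  have h2 : Real.log ((1-x)⁻¹) ≤ (1-x)⁻¹ - 1 := Real.log_le_sub_one_of_pos (by positivity)
  rw [Real.log_inv] at h2
  have h3 : (1-x)⁻¹ - 1 = x / (1-x) := by field_simp; ring
  have h4 : x / (1-x) ≤ x + 2*x^2 := by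
    rw [div_le_iff₀ h1]
    nlinarith [sq_nonneg x, mul_nonneg (sq_nonneg x) (show (0:ℝ) ≤ 1 - 2*x by linarith)]
  linarith [h3 ▸ h2]

lemma exp_neg_le {c x : ℝ} (hx0 : 0 ≤ x) (hx1 : x ≤ 1) :
    Real.exp (-(c * x)) ≤ 1 - x * (1 - Real.exp (-c)) := by
  have h := convexOn_exp.2 (Set.mem_univ (0:ℝ)) (Set.mem_univ (-c))
    (show (0:ℝ) ≤ 1 - x by linarith) hx0 (by ring)
  simp only [smul_eq_mul, mul_zero, zero_add, mul_neg, Real.exp_zero, mul_one] at h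
  calc Real.exp (-(c*x)) = Real.exp (-(x*c)) := by ring_nf
    _ ≤ (1-x) + x * Real.exp (-c) := h
    _ = 1 - x * (1 - Real.exp (-c)) := by ring

set_option maxHeartbeats 2000000 in
theorem stmt_5 (v γ : ℕ → ℝ) (vstar α ξ m : ℝ)
    (hv : GS vstar v) (hγ : GS (-α) γ) (hα : 1/2 < α ∧ α ≤ 1)
    (hγ01 : ∀ n, 1 ≤ n → γ n ∈ Set.Ioo (0 : ℝ) 1)
    (hdiv : Tendsto (fun n => ∑ k ∈ Icc 1 n, γ k) atTop atTop)
    (hξ : 0 ≤ ξ)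
    (hξlim : Tendsto (fun n : ℕ => ((n : ℝ) * γ n)⁻¹) atTop (nhds ξ))
    (hm : 0 < m) (hmξ : 0 < m - vstar * ξ)
    (a : ℕ → ℝ) (ha : ∀ n, 0 < a n) (ha0 : Tendsto a atTop (nhds 0))
    (δ : ℝ) :
    Tendsto
      (fun n : ℕ =>
        v n * (∏ j ∈ Icc 1 n, (1 - γ j)) ^ m *
          (∑ k ∈ Icc 1 n, ((∏ j ∈ Icc 1 k, (1 - γ j)) ^ m)⁻¹ * (γ k / v k) * a k
            + δ))
      atTop (nhds 0) := by
  have hγpos : ∀ k, 1 ≤ k → 0 < γ k := fun k hk => (hγ01 k hk).1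
  have hγlt1 : ∀ k, 1 ≤ k → γ k < 1 := fun k hk => (hγ01 k hk).2
  set P : ℕ → ℝ := fun n => ∏ j ∈ Icc 1 n, (1 - γ j) with hPdef
  have hPpos : ∀ n, 0 < P n := by
    intro n
    simp only [hPdef]
    refine Finset.prod_pos fun j hj => ?_
    have := hγlt1 j (Finset.mem_Icc.mp hj).1
    linarith
  set w : ℕ → ℝ := fun n => v n * P n ^ m with hwdef
  set Γ : ℕ → ℝ := fun n => ∑ k ∈ Icc 1 n, γ k with hΓdef
  have hΓdiv : Tendsto Γ atTop atTop := by rw [hΓdef]; exact hdiv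
  set c : ℝ := (m - vstar * ξ) / 2 with hcdef
  have hcpos : 0 < c := by rw [hcdef]; linarith
  -- shifted limits
  have ht : Tendsto (fun n : ℕ => ((n:ℝ)+1) * (1 - v n / v (n+1))) atTop (nhds vstar) := by
    have := hv.2.comp (tendsto_add_atTop_nat 1)
    simp only [Function.comp_def] at this
    convert this using 2 with n
    push_cast
    simp [Nat.add_sub_cancel]
  have hs : Tendsto (fun n : ℕ => (((n:ℝ)+1) * γ (n+1))⁻¹) atTop (nhds ξ) := by
    have h := hξlim.comp (tendsto_add_atTop_nat 1)
    exact h.congr fun n => by simp only [Function.comp_apply, Nat.cast_add, Nat.cast_one]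
  set t : ℕ → ℝ := fun n => ((n:ℝ)+1) * (1 - v n / v (n+1)) with htdef
  set s : ℕ → ℝ := fun n => (((n:ℝ)+1) * γ (n+1))⁻¹ with hsdef
  set g : ℕ → ℝ := fun n => t n * s n + 2 * (t n ^ 2 * s n * ((n:ℝ)+1)⁻¹) with hgdef
  have hinv : Tendsto (fun n : ℕ => ((n:ℝ)+1)⁻¹) atTop (nhds 0) := by
    exact tendsto_one_div_add_atTop_nhds_zero_nat.congr fun n => one_div _
  have hg : Tendsto g atTop (nhds (vstar * ξ)) := by
    rw [hgdef]
    have h2 : Tendsto (fun n => 2 * (t n ^ 2 * s n * ((n:ℝ)+1)⁻¹)) atTop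
        (nhds (2 * (vstar ^ 2 * ξ * 0))) := (((ht.pow 2).mul hs).mul hinv).const_mul 2
    have h3 := (ht.mul hs).add h2
    simpa using h3
  have hx0 : Tendsto (fun n => t n * ((n:ℝ)+1)⁻¹) atTop (nhds 0) := by
    simpa using ht.mul hinv
  -- extract N
  have hev : ∀ᶠ n in atTop, (0 < v n ∧ 0 < v (n+1)) ∧ g n ≤ vstar * ξ + c ∧
      |t n * ((n:ℝ)+1)⁻¹| ≤ 1/2 := by
    have e1 : ∀ᶠ n in atTop, 0 < v n := hv.1
    have e2 : ∀ᶠ (n : ℕ) in atTop, 0 < v (n+1) := (tendsto_add_atTop_nat 1).eventually hv.1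
    have e3 : ∀ᶠ n in atTop, g n ≤ vstar * ξ + c :=
      (hg.eventually_lt_const (by linarith)).mono fun n h => h.le
    have e4 : ∀ᶠ n in atTop, |t n * ((n:ℝ)+1)⁻¹| ≤ 1/2 := by
      have habs : Tendsto (fun n => |t n * ((n:ℝ)+1)⁻¹|) atTop (nhds 0) := by
        simpa using hx0.abs
      exact (habs.eventually_lt_const (show (0:ℝ) < 1/2 by norm_num)).mono fun n h => by
        simpa using h.le
    filter_upwards [e1, e2, e3, e4] with n h1 h2 h3 h4
    exact ⟨⟨h1, h2⟩, h3, h4⟩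
  obtain ⟨N, hN⟩ := eventually_atTop.mp hev
  have hwpos : ∀ n, N ≤ n → 0 < w n := fun n hn => by
    simp only [hwdef]
    exact mul_pos ((hN n hn).1.1) (Real.rpow_pos_of_pos (hPpos n) m)
  -- single step bound
  have hstep : ∀ n, N ≤ n → w (n+1) ≤ w n * Real.exp (-(c * γ (n+1))) := by
    intro n hn
    obtain ⟨⟨hv1, hv2⟩, hgb, hxb⟩ := hN n hn
    have hγp : 0 < γ (n+1) := hγpos _ (Nat.le_add_left 1 n)
    have hγl : γ (n+1) < 1 := hγlt1 _ (Nat.le_add_left 1 n)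
    have hn1 : ((n:ℝ)+1) ≠ 0 := by positivity
    set x : ℝ := t n * ((n:ℝ)+1)⁻¹ with hxdef
    have hid : 1 - x = v n / v (n+1) := by
      rw [hxdef]
      simp only [htdef]
      field_simp
      ring
    have hlogv : Real.log (v (n+1)) - Real.log (v n) ≤ (vstar * ξ + c) * γ (n+1) := by
      have h1 : Real.log (v n / v (n+1)) = Real.log (v n) - Real.log (v (n+1)) :=
        Real.log_div hv1.ne' hv2.ne'
      have h2 : -Real.log (1 - x) ≤ x + 2 * x ^ 2 := neg_log_one_sub_le hxb
      have h3 : x + 2 * x ^ 2 = g n * γ (n+1) := by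
        simp only [hxdef, hgdef, hsdef]
        field_simp
      have h4 : g n * γ (n+1) ≤ (vstar * ξ + c) * γ (n+1) :=
        mul_le_mul_of_nonneg_right hgb hγp.le
      rw [hid, h1] at h2
      linarith
    have hPsucc : P (n+1) = P n * (1 - γ (n+1)) := by
      simp only [hPdef]
      exact Finset.prod_Icc_succ_top (Nat.le_add_left 1 n) _
    have hlogP : Real.log (P (n+1)) = Real.log (P n) + Real.log (1 - γ (n+1)) := by
      rw [hPsucc, Real.log_mul (hPpos n).ne' (by linarith)]
    have hlog1 : Real.log (1 - γ (n+1)) ≤ -γ (n+1) := by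
      have := Real.log_le_sub_one_of_pos (show (0:ℝ) < 1 - γ (n+1) by linarith)
      linarith
    have hwn : 0 < w n := hwpos n hn
    have hwn1 : 0 < w (n+1) := hwpos (n+1) (by omega)
    have hlogw : ∀ k, 0 < v k → Real.log (w k) = Real.log (v k) + m * Real.log (P k) := by
      intro k hk
      simp only [hwdef]
      rw [Real.log_mul hk.ne' (Real.rpow_pos_of_pos (hPpos k) m).ne', Real.log_rpow (hPpos k)]
    have key : Real.log (w (n+1)) ≤ Real.log (w n) + -(c * γ (n+1)) := by
      rw [hlogw _ hv2, hlogw _ hv1, hlogP]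
      have hmm : m * Real.log (1 - γ (n+1)) ≤ m * (-γ (n+1)) :=
        mul_le_mul_of_nonneg_left hlog1 hm.le
      have hcc : (vstar * ξ + c) * γ (n+1) + m * (-γ (n+1)) = -(c * γ (n+1)) := by
        rw [hcdef]; ring
      nlinarith [hlogv, hmm]
    calc w (n+1) = Real.exp (Real.log (w (n+1))) := (Real.exp_log hwn1).symm
      _ ≤ Real.exp (Real.log (w n) + -(c * γ (n+1))) := Real.exp_le_exp.mpr key
      _ = w n * Real.exp (-(c * γ (n+1))) := by rw [Real.exp_add, Real.exp_log hwn]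
  -- chain bound
  have hchain : ∀ k n, N ≤ k → k ≤ n → w n ≤ w k * Real.exp (-(c * (Γ n - Γ k))) := by
    intro k n hNk hkn
    induction n, hkn using Nat.le_induction with
    | base => simp
    | succ n hn ih =>
      have h1 := hstep n (hNk.trans hn)
      have h2 : w n * Real.exp (-(c * γ (n+1))) ≤
          (w k * Real.exp (-(c * (Γ n - Γ k)))) * Real.exp (-(c * γ (n+1))) :=
        mul_le_mul_of_nonneg_right ih (Real.exp_nonneg _)
      have hΓsucc : Γ (n+1) = Γ n + γ (n+1) := by
        simp only [hΓdef]
        exact Finset.sum_Icc_succ_top (Nat.le_add_left 1 n) γ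
      calc w (n+1) ≤ w n * Real.exp (-(c * γ (n+1))) := h1
        _ ≤ (w k * Real.exp (-(c * (Γ n - Γ k)))) * Real.exp (-(c * γ (n+1))) := h2
        _ = w k * Real.exp (-(c * (Γ (n+1) - Γ k))) := by
            rw [mul_assoc, ← Real.exp_add, hΓsucc]; ring_nf
  -- w tends to 0
  have hA : Tendsto w atTop (nhds 0) := by
    have hbd : ∀ᶠ n in atTop, w n ≤ (w N * Real.exp (c * Γ N)) * Real.exp (-(c * Γ n)) := by
      filter_upwards [eventually_ge_atTop N] with n hn
      calc w n ≤ w N * Real.exp (-(c * (Γ n - Γ N))) := hchain N n le_rfl hn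
        _ = (w N * Real.exp (c * Γ N)) * Real.exp (-(c * Γ n)) := by
            rw [show -(c * (Γ n - Γ N)) = c * Γ N + -(c * Γ n) from by ring,
              Real.exp_add, ← mul_assoc]
    have hnn : ∀ᶠ n in atTop, 0 ≤ w n := by
      filter_upwards [eventually_ge_atTop N] with n hn
      exact (hwpos n hn).le
    have hg0 : Tendsto (fun n => (w N * Real.exp (c * Γ N)) * Real.exp (-(c * Γ n)))
        atTop (nhds 0) := by
      have h1 : Tendsto (fun n => -(c * Γ n)) atTop atBot :=
        tendsto_neg_atBot_iff.mpr (hΓdiv.const_mul_atTop hcpos)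
      have h2 := Real.tendsto_exp_atBot.comp h1
      simpa [Function.comp] using h2.const_mul (w N * Real.exp (c * Γ N))
    exact squeeze_zero' hnn hbd hg0
  -- K
  set K : ℝ := 1 - Real.exp (-c) with hKdef
  have hKpos : 0 < K := by
    rw [hKdef]
    have : Real.exp (-c) < 1 := Real.exp_lt_one_iff.mpr (by linarith)
    linarith
  -- summation bound
  have hsum : ∀ M n, 1 ≤ M → M ≤ n →
      ∑ k ∈ Ioc M n, Real.exp (-(c * (Γ n - Γ k))) * γ k ≤ 1 / K := by
    intro M n hM hMn
    have hts : ∀ n', M ≤ n' → ∑ k ∈ Ioc M n', Real.exp (c * Γ k) * γ k ≤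
        Real.exp (c * Γ n') / K := by
      intro n' hn'
      induction n', hn' using Nat.le_induction with
      | base =>
        simp only [Finset.Ioc_self, Finset.sum_empty]
        positivity
      | succ n' hn' ih =>
        rw [Finset.sum_Ioc_succ_top hn']
        have hγp : 0 < γ (n'+1) := hγpos _ (Nat.le_add_left 1 n')
        have hγl : γ (n'+1) < 1 := hγlt1 _ (Nat.le_add_left 1 n')
        have hΓsucc : Γ (n'+1) = Γ n' + γ (n'+1) := by
          simp only [hΓdef]
          exact Finset.sum_Icc_succ_top (Nat.le_add_left 1 n') γ
        have hterm : Real.exp (c * Γ (n'+1)) * γ (n'+1) ≤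
            (Real.exp (c * Γ (n'+1)) - Real.exp (c * Γ n')) / K := by
          rw [le_div_iff₀ hKpos]
          have h1 : Real.exp (c * Γ n') = Real.exp (c * Γ (n'+1)) * Real.exp (-(c * γ (n'+1))) := by
            rw [← Real.exp_add, hΓsucc]; ring_nf
          have h2 : Real.exp (-(c * γ (n'+1))) ≤ 1 - γ (n'+1) * K := by
            have := exp_neg_le (c := c) hγp.le hγl.le
            rw [hKdef]
            linarith
          have h3 : (0:ℝ) < Real.exp (c * Γ (n'+1)) := Real.exp_pos _
          nlinarith
        have := add_le_add ih hterm
        calc ∑ k ∈ Ioc M n', Real.exp (c * Γ k) * γ k + Real.exp (c * Γ (n'+1)) * γ (n'+1)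
            ≤ Real.exp (c * Γ n') / K + (Real.exp (c * Γ (n'+1)) - Real.exp (c * Γ n')) / K := this
          _ = Real.exp (c * Γ (n'+1)) / K := by ring
    have hexp1 : Real.exp (-(c * Γ n)) * Real.exp (c * Γ n) = 1 := by
      rw [← Real.exp_add]; simp
    calc ∑ k ∈ Ioc M n, Real.exp (-(c * (Γ n - Γ k))) * γ k
        = Real.exp (-(c * Γ n)) * ∑ k ∈ Ioc M n, Real.exp (c * Γ k) * γ k := by
          rw [Finset.mul_sum]
          refine Finset.sum_congr rfl fun k _ => ?_
          rw [← mul_assoc, ← Real.exp_add]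
          ring_nf
      _ ≤ Real.exp (-(c * Γ n)) * (Real.exp (c * Γ n) / K) :=
          mul_le_mul_of_nonneg_left (hts n hMn) (Real.exp_nonneg _)
      _ = (Real.exp (-(c * Γ n)) * Real.exp (c * Γ n)) / K := by ring
      _ = 1 / K := by rw [hexp1]
  -- part B
  set S : ℕ → ℝ := fun n => ∑ k ∈ Icc 1 n, (P k ^ m)⁻¹ * (γ k / v k) * a k with hSdef
  have hB : Tendsto (fun n => w n * S n) atTop (nhds 0) := by
    rw [NormedAddCommGroup.tendsto_nhds_zero]
    intro ε hε
    have hε' : (0:ℝ) < ε * K / 2 := by positivity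
    obtain ⟨M₀, hM₀⟩ := eventually_atTop.mp (ha0.eventually_lt_const hε')
    set M := max (max M₀ N) 1 with hMdef
    have hM1 : 1 ≤ M := le_max_right _ _
    have hMN : N ≤ M := le_trans (le_max_right _ _) (le_max_left _ _)
    have hMM0 : M₀ ≤ M := le_trans (le_max_left _ _) (le_max_left _ _)
    have hws : Tendsto (fun n => w n * S M) atTop (nhds 0) := by
      simpa using hA.mul_const (S M)
    have h1 : ∀ᶠ n in atTop, |w n * S M| < ε / 2 := by
      filter_upwards [(NormedAddCommGroup.tendsto_nhds_zero.mp hws) (ε/2) (by positivity)]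
        with n h
      rwa [Real.norm_eq_abs] at h
    filter_upwards [h1, eventually_ge_atTop M] with n hn1 hn2
    have hsplit : S n = S M + ∑ k ∈ Ioc M n, (P k ^ m)⁻¹ * (γ k / v k) * a k := by
      simp only [hSdef]
      rw [show Icc 1 n = Ioc 0 n from Finset.Icc_add_one_left_eq_Ioc 0 n, show Icc 1 M = Ioc 0 M from Finset.Icc_add_one_left_eq_Ioc 0 M,
        ← Finset.sum_Ioc_consecutive _ (Nat.zero_le M) hn2]
    have hterm : ∀ k ∈ Ioc M n,
        w n * ((P k ^ m)⁻¹ * (γ k / v k) * a k) ≤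
          (Real.exp (-(c * (Γ n - Γ k))) * γ k) * (ε * K / 2) := by
      intro k hk
      obtain ⟨hMk, hkn⟩ := Finset.mem_Ioc.mp hk
      have hkN : N ≤ k := hMN.trans hMk.le
      have hk1 : 1 ≤ k := hM1.trans hMk.le
      have hvk : 0 < v k := (hN k hkN).1.1
      have hγk : 0 < γ k := hγpos k hk1
      have hwk : 0 < w k := hwpos k hkN
      have hak : a k < ε * K / 2 := hM₀ k (hMM0.trans hMk.le)
      have heq : w n * ((P k ^ m)⁻¹ * (γ k / v k) * a k) = (w n / w k) * (γ k * a k) := by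
        have hwk' : w k = v k * P k ^ m := by rw [hwdef]
        rw [hwk', division_def, division_def, mul_inv]
        ring
      have hdw : w n / w k ≤ Real.exp (-(c * (Γ n - Γ k))) := by
        rw [div_le_iff₀ hwk]
        calc w n ≤ w k * Real.exp (-(c * (Γ n - Γ k))) := hchain k n hkN hkn
          _ = Real.exp (-(c * (Γ n - Γ k))) * w k := mul_comm _ _
      calc w n * ((P k ^ m)⁻¹ * (γ k / v k) * a k) = (w n / w k) * (γ k * a k) := heq
        _ ≤ Real.exp (-(c * (Γ n - Γ k))) * (γ k * (ε * K / 2)) := by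
            refine mul_le_mul hdw ?_ (mul_nonneg hγk.le (ha k).le) (Real.exp_nonneg _)
            exact mul_le_mul_of_nonneg_left hak.le hγk.le
        _ = (Real.exp (-(c * (Γ n - Γ k))) * γ k) * (ε * K / 2) := by ring
    have hR0 : 0 ≤ ∑ k ∈ Ioc M n, w n * ((P k ^ m)⁻¹ * (γ k / v k) * a k) := by
      refine Finset.sum_nonneg fun k hk => ?_
      obtain ⟨hMk, hkn⟩ := Finset.mem_Ioc.mp hk
      have hkN : N ≤ k := hMN.trans hMk.le
      have hvk : 0 < v k := (hN k hkN).1.1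
      have hγk : 0 < γ k := hγpos k (hM1.trans hMk.le)
      have hwn : 0 < w n := hwpos n (hMN.trans hn2)
      have hPk : 0 < P k ^ m := Real.rpow_pos_of_pos (hPpos k) m
      exact mul_nonneg hwn.le (mul_nonneg (mul_nonneg (inv_nonneg.mpr hPk.le)
        (div_nonneg hγk.le hvk.le)) (ha k).le)
    have hRle : ∑ k ∈ Ioc M n, w n * ((P k ^ m)⁻¹ * (γ k / v k) * a k) ≤ ε / 2 := by
      calc ∑ k ∈ Ioc M n, w n * ((P k ^ m)⁻¹ * (γ k / v k) * a k)
          ≤ ∑ k ∈ Ioc M n, (Real.exp (-(c * (Γ n - Γ k))) * γ k) * (ε * K / 2) :=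
            Finset.sum_le_sum hterm
        _ = (∑ k ∈ Ioc M n, Real.exp (-(c * (Γ n - Γ k))) * γ k) * (ε * K / 2) :=
            (Finset.sum_mul _ _ _).symm
        _ ≤ (1 / K) * (ε * K / 2) := by
            refine mul_le_mul_of_nonneg_right (hsum M n hM1 hn2) (by positivity)
        _ = ε / 2 := by
            field_simp
    have hwsn : w n * S n = w n * S M + ∑ k ∈ Ioc M n, w n * ((P k ^ m)⁻¹ * (γ k / v k) * a k) := by
      rw [hsplit, mul_add]
      congr 1
      exact Finset.mul_sum _ _ _
    rw [Real.norm_eq_abs, hwsn]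
    calc |w n * S M + ∑ k ∈ Ioc M n, w n * ((P k ^ m)⁻¹ * (γ k / v k) * a k)|
        ≤ |w n * S M| + |∑ k ∈ Ioc M n, w n * ((P k ^ m)⁻¹ * (γ k / v k) * a k)| := abs_add_le _ _
      _ < ε / 2 + ε / 2 := by
          refine add_lt_add_of_lt_of_le hn1 ?_
          rw [abs_of_nonneg hR0]
          exact hRle
      _ = ε := by ring
  have hfinal : Tendsto (fun n => w n * S n + w n * δ) atTop (nhds 0) := by
    have := hB.add (hA.mul_const δ)
    simpa using this
  refine hfinal.congr fun n => ?_
  simp only [hwdef, hSdef, hPdef]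
  ring
end

section
/- Let (γ_n) ∈ GS(-α) with α ∈ (1/2, 1], γ_n ∈ (0,1), and suppose ξ = lim_{n→∞} (n γ_n)^{-1} exists and satisfies 2 - (α - ad)ξ > 0 for given a, d with α - ad real. Set Π_n = ∏_{j=1}^n (1 - γ_j), s_n = ∑_{k=1}^n γ_k, and H_n^2 = Π_n^2 γ_n^{-1} h_n^d where (γ_n^{-1} h_n^d) ∈ GS(α - ad). Then ln(H_n^{-2}) = (2 - ξ(α - ad)) s_n + o(s_n); in particular H_n^{-2} → ∞. -/
open Filter Finset

lemma stolz (a b : ℕ → ℝ) (l : ℝ) (hb : ∀ n, 1 ≤ n → 0 < b n)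
    (hB : Tendsto (fun n => ∑ k ∈ Icc 1 n, b k) atTop atTop)
    (hab : Tendsto (fun n => a n / b n) atTop (nhds l)) :
    Tendsto (fun n => (∑ k ∈ Icc 1 n, a k) / ∑ k ∈ Icc 1 n, b k) atTop (nhds l) := by
  rw [Metric.tendsto_atTop]
  intro ε hε
  have h4 : (0:ℝ) < ε/4 := by linarith
  obtain ⟨N, hN⟩ := (Metric.tendsto_atTop.1 hab (ε/4) h4)
  set N' := max N 1 with hN'
  have hN'1 : 1 ≤ N' := le_max_right _ _
  have key : ∀ n, N' ≤ n → |a n - l * b n| ≤ (ε/4) * b n := by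
    intro n hn
    have hbn := hb n (le_trans hN'1 hn)
    have h1 := hN n (le_trans (le_max_left _ _) hn)
    rw [Real.dist_eq] at h1
    calc |a n - l * b n| = |(a n / b n - l) * b n| := by
          rw [sub_mul, div_mul_cancel₀ _ hbn.ne']
      _ = |a n / b n - l| * |b n| := abs_mul _ _
      _ = |a n / b n - l| * b n := by rw [abs_of_pos hbn]
      _ ≤ (ε/4) * b n := mul_le_mul_of_nonneg_right h1.le hbn.le
  set C := |∑ k ∈ Icc 1 N', (a k - l * b k)| with hC
  have main : ∀ n, N' ≤ n →
      |∑ k ∈ Icc 1 n, a k - l * ∑ k ∈ Icc 1 n, b k| ≤ C + (ε/4) * ∑ k ∈ Icc 1 n, b k := by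
    intro n hn
    have hdisj' : Disjoint (Finset.Ioc 0 N') (Finset.Ioc N' n) := by
      rw [Finset.disjoint_left]
      intro x hx hx'
      simp only [Finset.mem_Ioc] at *
      omega
    have hsplit : ∑ k ∈ Icc 1 n, (a k - l * b k)
        = ∑ k ∈ Icc 1 N', (a k - l * b k) + ∑ k ∈ Ioc N' n, (a k - l * b k) := by
      rw [show Finset.Icc 1 n = Finset.Ioc 0 n from rfl,
        show Finset.Icc 1 N' = Finset.Ioc 0 N' from rfl,
        ← Finset.Ioc_union_Ioc_eq_Ioc (Nat.zero_le N') hn, Finset.sum_union hdisj']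
    have h1 : |∑ k ∈ Ioc N' n, (a k - l * b k)| ≤ (ε/4) * ∑ k ∈ Icc 1 n, b k := by
      calc |∑ k ∈ Ioc N' n, (a k - l * b k)| ≤ ∑ k ∈ Ioc N' n, |a k - l * b k| :=
            Finset.abs_sum_le_sum_abs _ _
        _ ≤ ∑ k ∈ Ioc N' n, (ε/4) * b k := by
            apply Finset.sum_le_sum
            intro k hk
            simp only [Finset.mem_Ioc] at hk
            exact key k hk.1.le
        _ = (ε/4) * ∑ k ∈ Ioc N' n, b k := by rw [Finset.mul_sum]
        _ ≤ (ε/4) * ∑ k ∈ Icc 1 n, b k := by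
            apply mul_le_mul_of_nonneg_left _ h4.le
            apply Finset.sum_le_sum_of_subset_of_nonneg
            · intro x hx
              simp only [Finset.mem_Ioc, Finset.mem_Icc] at *
              omega
            · intro k hk _
              exact (hb k (Finset.mem_Icc.1 hk).1).le
    calc |∑ k ∈ Icc 1 n, a k - l * ∑ k ∈ Icc 1 n, b k|
        = |∑ k ∈ Icc 1 n, (a k - l * b k)| := by
          rw [Finset.sum_sub_distrib, Finset.mul_sum]
      _ ≤ C + |∑ k ∈ Ioc N' n, (a k - l * b k)| := by
          rw [hsplit]; exact abs_add_le _ _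
      _ ≤ C + (ε/4) * ∑ k ∈ Icc 1 n, b k := by linarith
  have hBn := eventually_atTop.1 (hB.eventually_ge_atTop (max (4 * C / ε) 1))
  obtain ⟨M, hM⟩ := hBn
  refine ⟨max M N', fun n hn => ?_⟩
  have hn1 := le_trans (le_max_left M N') hn
  have hn2 := le_trans (le_max_right M N') hn
  set B := ∑ k ∈ Icc 1 n, b k with hBdef
  have hB1 : (1:ℝ) ≤ B := le_trans (le_max_right _ _) (hM n hn1)
  have hB2 : 4 * C / ε ≤ B := le_trans (le_max_left _ _) (hM n hn1)
  have hBpos : (0:ℝ) < B := by linarith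
  rw [Real.dist_eq]
  have heq : (∑ k ∈ Icc 1 n, a k) / B - l = (∑ k ∈ Icc 1 n, a k - l * B) / B := by
    field_simp
  have hCB : C / B ≤ ε/4 := by
    rw [div_le_iff₀ hBpos]
    rw [div_le_iff₀ hε] at hB2
    nlinarith
  calc |(∑ k ∈ Icc 1 n, a k) / B - l| = |∑ k ∈ Icc 1 n, a k - l * B| / B := by
        rw [heq, abs_div, abs_of_pos hBpos]
    _ ≤ (C + (ε/4) * B) / B := by gcongr; exact main n hn2
    _ = C / B + ε/4 := by rw [add_div, mul_div_assoc, div_self hBpos.ne', mul_one]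
    _ ≤ ε/4 + ε/4 := by linarith
    _ < ε := by linarith

lemma log_one_add_ge {x : ℝ} (h0 : 0 ≤ x) (h1 : x ≤ 1) : x/2 ≤ Real.log (1+x) := by
  have hpos : (0:ℝ) < 1 + x := by linarith
  have h2 : Real.log (1+x)⁻¹ ≤ (1+x)⁻¹ - 1 := Real.log_le_sub_one_of_pos (by positivity)
  rw [Real.log_inv] at h2
  have h3 : x / (1+x) ≤ Real.log (1+x) := by
    have h5 : (1+x)⁻¹ - 1 = -(x/(1+x)) := by field_simp; ring
    linarith [h2.trans_eq h5]
  have h4 : x/2 ≤ x/(1+x) := by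
    rw [div_le_div_iff₀ (by norm_num) hpos]
    nlinarith
  linarith

lemma GS_tendsto_zero {α : ℝ} (hα0 : 0 < α) (hα1 : α ≤ 1) {v : ℕ → ℝ}
    (hv : GS (-α) v) (hvpos : ∀ n, 1 ≤ n → 0 < v n) :
    Tendsto v atTop (nhds 0) := by
  obtain ⟨N₀, hN₀⟩ := eventually_atTop.1 (hv.2.eventually_lt_const (show -α < -α/2 by linarith))
  set N := max N₀ 1 with hNdef
  have hN1 : 1 ≤ N := le_max_right _ _
  set H : ℕ → ℝ := fun n => ∑ i ∈ range n, (1:ℝ)/(i+1) with hHdef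
  -- key step inequality
  have step : ∀ n, N ≤ n → Real.log (v (n+1)) ≤ Real.log (v n) - α/(4*((n:ℝ)+1)) := by
    intro n hn
    have hvn := hvpos n (le_trans hN1 hn)
    have hvn1 := hvpos (n+1) (by omega)
    have h0 := hN₀ (n+1) (by omega)
    have h2 : (n+1 : ℕ) - 1 = n := rfl
    rw [h2] at h0
    push_cast at h0
    have hcast : (0:ℝ) < (n:ℝ)+1 := by positivity
    have hratio : 1 + α/(2*((n:ℝ)+1)) < v n / v (n+1) := by
      have h6 : α/(2*((n:ℝ)+1)) < v n / v (n+1) - 1 := by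
        rw [div_lt_iff₀ (by positivity)]
        nlinarith
      linarith
    set x := α/(2*((n:ℝ)+1)) with hx
    have hx0 : 0 ≤ x := by positivity
    have hx1 : x ≤ 1 := by
      rw [hx, div_le_one (by positivity)]
      nlinarith [Nat.cast_nonneg (α := ℝ) n]
    have hmul : v (n+1) * (1 + x) < v n := by
      rw [mul_comm]
      exact (lt_div_iff₀ hvn1).mp hratio
    have hlog : Real.log (v (n+1)) + Real.log (1+x) ≤ Real.log (v n) := by
      rw [← Real.log_mul hvn1.ne' (by positivity)]
      exact Real.log_le_log (by positivity) hmul.le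
    have h7 := log_one_add_ge hx0 hx1
    have hxval : x/2 = α/(4*((n:ℝ)+1)) := by
      rw [hx, div_div, show (2*((n:ℝ)+1))*2 = 4*((n:ℝ)+1) by ring]
    linarith
  -- telescoped bound
  have bound : ∀ n, N ≤ n → Real.log (v n) ≤ Real.log (v N) - (α/4) * (H n - H N) := by
    intro n hn
    induction n, hn using Nat.le_induction with
    | base => simp
    | succ n hn ih =>
      have hstep := step n hn
      have hH : H (n+1) = H n + 1/((n:ℝ)+1) := by
        rw [hHdef]
        simp [Finset.sum_range_succ]
      have : α/(4*((n:ℝ)+1)) = (α/4) * (1/((n:ℝ)+1)) := by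
        rw [div_mul_div_comm, mul_one]
      rw [hH]
      linarith
  -- conclude
  have hHtop : Tendsto H atTop atTop := Real.tendsto_sum_range_one_div_nat_succ_atTop
  have hbtop : Tendsto (fun n => Real.log (v N) - (α/4) * (H n - H N)) atTop atBot := by
    apply tendsto_atBot_add_const_left
    rw [show (fun n => -((α/4) * (H n - H N))) = (fun n => (-(α/4)) * (H n - H N)) from by
      funext n; ring]
    apply Tendsto.const_mul_atTop_of_neg (by linarith : -(α/4) < 0)
    exact tendsto_atTop_add_const_right _ _ hHtop
  have hexp : Tendsto (fun n => Real.exp (Real.log (v N) - (α/4) * (H n - H N))) atTop (nhds 0) :=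
    Real.tendsto_exp_atBot.comp hbtop
  apply tendsto_of_tendsto_of_tendsto_of_le_of_le' tendsto_const_nhds hexp
  · filter_upwards [eventually_ge_atTop 1] with n hn
    exact (hvpos n hn).le
  · filter_upwards [eventually_ge_atTop N] with n hn
    have h8 := bound n hn
    calc v n = Real.exp (Real.log (v n)) := (Real.exp_log (hvpos n (le_trans hN1 hn))).symm
      _ ≤ _ := Real.exp_le_exp.mpr h8

lemma log_one_sub_bound {x : ℝ} (hx : |x| ≤ 1/2) :
    |Real.log (1 - x) + x| ≤ 2 * x ^ 2 := by
  have h1 : |x| < 1 := lt_of_le_of_lt hx (by norm_num)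
  have h := Real.abs_log_sub_add_sum_range_le h1 1
  simp only [Finset.range_one, Finset.sum_singleton, pow_one, Nat.cast_zero, zero_add,
    div_one] at h
  have h2 : |x| ^ 2 / (1 - |x|) ≤ 2 * x ^ 2 := by
    rw [div_le_iff₀ (by linarith)]
    have h3 : |x| ^ 2 = x ^ 2 := sq_abs x
    nlinarith [sq_nonneg x, abs_nonneg x]
  calc |Real.log (1 - x) + x| = |x + Real.log (1 - x)| := by rw [add_comm]
    _ ≤ |x| ^ (1+1) / (1 - |x|) := h
    _ ≤ 2 * x ^ 2 := h2

lemma GS_log_increment {β : ℝ} {u : ℕ → ℝ} (hu : GS β u) :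
    Tendsto (fun n : ℕ => (n:ℝ) * (Real.log (u n) - Real.log (u (n-1)))) atTop (nhds β) := by
  set t : ℕ → ℝ := fun n => 1 - u (n-1) / u n with htdef
  have hnt : Tendsto (fun n : ℕ => (n:ℝ) * t n) atTop (nhds β) := hu.2
  have ht : Tendsto t atTop (nhds 0) := by
    have h1 : Tendsto (fun n : ℕ => ((n:ℝ) * t n) * (1/(n:ℝ))) atTop (nhds (β * 0)) :=
      hnt.mul tendsto_one_div_atTop_nhds_zero_nat
    rw [mul_zero] at h1
    apply h1.congr'
    filter_upwards [eventually_ge_atTop 1] with n hn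
    have : ((n:ℝ)) ≠ 0 := by positivity
    field_simp
  obtain ⟨M, hM⟩ := eventually_atTop.1 hu.1
  have hgood : ∀ᶠ n : ℕ in atTop, 0 < u n ∧ 0 < u (n-1) ∧ |t n| ≤ 1/2 := by
    have h2 : ∀ᶠ n : ℕ in atTop, |t n| ≤ 1/2 := by
      have h' := ht.abs
      rw [abs_zero] at h'
      exact (h'.eventually_lt_const (show (0:ℝ) < 1/2 by norm_num)).mono fun n hn => hn.le
    filter_upwards [eventually_ge_atTop (M+1), h2] with n hn h2n
    exact ⟨hM n (by omega), hM (n-1) (by omega), h2n⟩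
  set e : ℕ → ℝ := fun n => (n:ℝ) * (Real.log (u n) - Real.log (u (n-1))) - (n:ℝ) * t n with hedef
  have he : Tendsto e atTop (nhds 0) := by
    apply squeeze_zero_norm' (a := fun n : ℕ => 2 * |(n:ℝ) * t n| * |t n|)
    · filter_upwards [hgood] with n hn
      obtain ⟨h1, h2, h3⟩ := hn
      have hlog : Real.log (u n) - Real.log (u (n-1)) = -Real.log (1 - t n) := by
        rw [htdef]
        simp only [sub_sub_cancel]
        rw [Real.log_div h2.ne' h1.ne']
        ring
      have hb := log_one_sub_bound h3
      have : ‖e n‖ = (n:ℝ) * |Real.log (1 - t n) + t n| := by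
        rw [hedef]
        simp only [Real.norm_eq_abs]
        rw [hlog, show (n:ℝ) * -Real.log (1 - t n) - (n:ℝ) * t n
            = -((n:ℝ) * (Real.log (1 - t n) + t n)) by ring, abs_neg, abs_mul,
          Nat.abs_cast]
      rw [this, abs_mul, Nat.abs_cast]
      calc (n:ℝ) * |Real.log (1 - t n) + t n| ≤ (n:ℝ) * (2 * t n ^ 2) := by
            apply mul_le_mul_of_nonneg_left hb (Nat.cast_nonneg n)
        _ = 2 * ((n:ℝ) * |t n|) * |t n| := by rw [← sq_abs (t n)]; ring
    · have h4 : Tendsto (fun n : ℕ => 2 * |(n:ℝ) * t n| * |t n|) atTop (nhds (2 * |β| * |0|)) :=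
        ((hnt.abs.const_mul 2).mul ht.abs)
      simpa using h4
  have : Tendsto (fun n : ℕ => (n:ℝ) * t n + e n) atTop (nhds (β + 0)) := hnt.add he
  rw [add_zero] at this
  apply this.congr
  intro n
  rw [hedef]
  ring

lemma telescope_Icc (f : ℕ → ℝ) (n : ℕ) :
    ∑ k ∈ Icc 1 n, (f k - f (k-1)) = f n - f 0 := by
  induction n with
  | zero => simp
  | succ n ih =>
    rw [Finset.sum_Icc_succ_top (by omega), ih]
    simp only [Nat.add_sub_cancel]
    ring

/-- With `H n ^ 2 = Π n ^ 2 * γ n ⁻¹ * h n ^ d` and `(γ⁻¹ h^d) ∈ GS (α - a d)`,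
one has `ln (H n ^ (-2)) = (2 - ξ (α - a d)) s_n + o(s_n)`; in particular
`H n ^ (-2) → ∞`. -/
theorem stmt_7 (γ h : ℕ → ℝ) (α a d ξ : ℝ)
    (hγ : GS (-α) γ) (hα : 1/2 < α ∧ α ≤ 1)
    (hγ01 : ∀ n, 1 ≤ n → γ n ∈ Set.Ioo (0 : ℝ) 1)
    (hpos : ∀ n, 1 ≤ n → 0 < h n)
    (hξlim : Tendsto (fun n : ℕ => ((n : ℝ) * γ n)⁻¹) atTop (nhds ξ))
    (hξ : 0 < 2 - (α - a * d) * ξ)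
    (hgh : GS (α - a * d) (fun n => (γ n)⁻¹ * h n ^ d))
    (hdiv : Tendsto (fun n => ∑ k ∈ Icc 1 n, γ k) atTop atTop) :
    Tendsto
      (fun n : ℕ =>
        Real.log (((∏ j ∈ Icc 1 n, (1 - γ j)) ^ 2 * (γ n)⁻¹ * h n ^ d)⁻¹)
          / ∑ k ∈ Icc 1 n, γ k)
      atTop (nhds (2 - ξ * (α - a * d))) ∧
    Tendsto
      (fun n : ℕ => ((∏ j ∈ Icc 1 n, (1 - γ j)) ^ 2 * (γ n)⁻¹ * h n ^ d)⁻¹)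
      atTop atTop := by
  set β := α - a * d with hβ
  set u : ℕ → ℝ := fun n => (γ n)⁻¹ * h n ^ d with hu
  have hγ0 : ∀ n, 1 ≤ n → 0 < γ n := fun n hn => (hγ01 n hn).1
  have hγ1 : ∀ n, 1 ≤ n → γ n < 1 := fun n hn => (hγ01 n hn).2
  have hupos : ∀ n, 1 ≤ n → 0 < u n := fun n hn =>
    mul_pos (inv_pos.mpr (hγ0 n hn)) (Real.rpow_pos_of_pos (hpos n hn) d)
  have hγ00 : Tendsto γ atTop (nhds 0) :=
    GS_tendsto_zero (by linarith [hα.1]) hα.2 hγ hγ0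
  -- limit of (log u n - log u (n-1)) / γ n
  have hlogu : Tendsto (fun n : ℕ => (n:ℝ) * (Real.log (u n) - Real.log (u (n-1))))
      atTop (nhds β) := GS_log_increment hgh
  have ratio2 : Tendsto (fun n : ℕ => (Real.log (u n) - Real.log (u (n-1))) / γ n)
      atTop (nhds (β * ξ)) := by
    apply (hlogu.mul hξlim).congr'
    filter_upwards [eventually_ge_atTop 1] with n hn
    have hne : ((n:ℝ)) ≠ 0 := by positivity
    have hγne : γ n ≠ 0 := (hγ0 n hn).ne'
    rw [mul_inv]
    field_simp
  -- limit of -log(1-γ n)/γ n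
  have ratio1 : Tendsto (fun n : ℕ => (-Real.log (1 - γ n)) / γ n) atTop (nhds 1) := by
    have herr : Tendsto (fun n : ℕ => (-Real.log (1 - γ n)) / γ n - 1) atTop (nhds 0) := by
      apply squeeze_zero_norm' (a := fun n : ℕ => 2 * γ n)
      · have hsmall : ∀ᶠ n : ℕ in atTop, |γ n| ≤ 1/2 := by
          have h' := hγ00.abs
          rw [abs_zero] at h'
          exact (h'.eventually_lt_const (show (0:ℝ) < 1/2 by norm_num)).mono fun n hn => hn.le
        filter_upwards [eventually_ge_atTop 1, hsmall] with n hn hs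
        have hγn := hγ0 n hn
        have hb := log_one_sub_bound hs
        have heq : (-Real.log (1 - γ n)) / γ n - 1
            = -((Real.log (1 - γ n) + γ n) / γ n) := by
          field_simp
          ring
        rw [Real.norm_eq_abs, heq, abs_neg, abs_div, abs_of_pos hγn, div_le_iff₀ hγn]
        calc |Real.log (1 - γ n) + γ n| ≤ 2 * γ n ^ 2 := hb
          _ = 2 * γ n * γ n := by ring
      · have := hγ00.const_mul (2:ℝ)
        simpa using this
    have := herr.add_const 1
    rw [zero_add] at this
    apply this.congr
    intro n
    ring
  -- Stolz-Cesàro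
  set A : ℕ → ℝ := fun n => -2 * Real.log (1 - γ n) - (Real.log (u n) - Real.log (u (n-1)))
    with hA
  have hab : Tendsto (fun n => A n / γ n) atTop (nhds (2 - β * ξ)) := by
    have h1 : Tendsto (fun n : ℕ => 2 * ((-Real.log (1 - γ n)) / γ n)
        - (Real.log (u n) - Real.log (u (n-1))) / γ n) atTop (nhds (2 * 1 - β * ξ)) :=
      (ratio1.const_mul 2).sub ratio2
    rw [mul_one] at h1
    apply h1.congr
    intro n
    rw [hA, sub_div]
    ring
  have hstolz := stolz A γ (2 - β * ξ) hγ0 hdiv hab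
  -- sum identity
  have hsum : ∀ n, 1 ≤ n → ∑ k ∈ Icc 1 n, A k
      = -2 * Real.log (∏ j ∈ Icc 1 n, (1 - γ j)) - Real.log (u n) + Real.log (u 0) := by
    intro n _
    have hlogprod : Real.log (∏ j ∈ Icc 1 n, (1 - γ j))
        = ∑ j ∈ Icc 1 n, Real.log (1 - γ j) := by
      apply Real.log_prod
      intro j hj
      have := hγ1 j (Finset.mem_Icc.1 hj).1
      linarith [(sub_pos.mpr this).ne']
    rw [hA]
    rw [Finset.sum_sub_distrib, telescope_Icc (fun k => Real.log (u k)) n, hlogprod,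
      ← Finset.mul_sum]
    ring
  -- the log identity for the target function
  have hT : ∀ n, 1 ≤ n →
      Real.log (((∏ j ∈ Icc 1 n, (1 - γ j)) ^ 2 * (γ n)⁻¹ * h n ^ d)⁻¹)
        = ∑ k ∈ Icc 1 n, A k - Real.log (u 0) := by
    intro n hn
    have hP : 0 < ∏ j ∈ Icc 1 n, (1 - γ j) := by
      apply Finset.prod_pos
      intro j hj
      have := hγ1 j (Finset.mem_Icc.1 hj).1
      linarith
    have hun := hupos n hn
    rw [Real.log_inv, mul_assoc, Real.log_mul (by positivity) hun.ne',
      Real.log_pow, hsum n hn]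
    push_cast
    ring
  have hconst : Tendsto (fun n : ℕ => Real.log (u 0) / ∑ k ∈ Icc 1 n, γ k) atTop (nhds 0) :=
    Tendsto.div_atTop tendsto_const_nhds hdiv
  have part1 : Tendsto
      (fun n : ℕ =>
        Real.log (((∏ j ∈ Icc 1 n, (1 - γ j)) ^ 2 * (γ n)⁻¹ * h n ^ d)⁻¹)
          / ∑ k ∈ Icc 1 n, γ k)
      atTop (nhds (2 - ξ * (α - a * d))) := by
    have h1 := hstolz.sub hconst
    rw [show 2 - β * ξ - 0 = 2 - ξ * (α - a * d) by rw [hβ]; ring] at h1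
    apply h1.congr'
    filter_upwards [eventually_ge_atTop 1] with n hn
    rw [hT n hn, sub_div]
  refine ⟨part1, ?_⟩
  -- second conclusion
  have hslarge : ∀ᶠ n : ℕ in atTop, (1:ℝ) ≤ ∑ k ∈ Icc 1 n, γ k := hdiv.eventually_ge_atTop 1
  have hlogtop : Tendsto
      (fun n : ℕ => Real.log (((∏ j ∈ Icc 1 n, (1 - γ j)) ^ 2 * (γ n)⁻¹ * h n ^ d)⁻¹))
      atTop atTop := by
    have hmul : Tendsto (fun n : ℕ =>
        (Real.log (((∏ j ∈ Icc 1 n, (1 - γ j)) ^ 2 * (γ n)⁻¹ * h n ^ d)⁻¹)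
          / ∑ k ∈ Icc 1 n, γ k) * ∑ k ∈ Icc 1 n, γ k) atTop atTop := by
      apply Tendsto.pos_mul_atTop ?_ part1 hdiv
      have hc := mul_comm ξ (α - a * d)
      rw [hβ] at hξ
      linarith
    apply hmul.congr'
    filter_upwards [hslarge] with n hn
    have : (∑ k ∈ Icc 1 n, γ k) ≠ 0 := by linarith
    field_simp
  have hexp := Real.tendsto_exp_atTop.comp hlogtop
  apply hexp.congr'
  filter_upwards [eventually_ge_atTop 1] with n hn
  have hP : 0 < ∏ j ∈ Icc 1 n, (1 - γ j) := by
    apply Finset.prod_pos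
    intro j hj
    have := hγ1 j (Finset.mem_Icc.1 hj).1
    linarith
  have hFpos : 0 < ((∏ j ∈ Icc 1 n, (1 - γ j)) ^ 2 * (γ n)⁻¹ * h n ^ d)⁻¹ := by
    have h2 := hupos n hn
    rw [hu] at h2
    have h1 : 0 < (∏ j ∈ Icc 1 n, (1 - γ j)) ^ 2 * (γ n)⁻¹ * h n ^ d := by
      rw [mul_assoc]
      exact mul_pos (pow_pos hP 2) h2
    exact inv_pos.mpr h1
  simp only [Function.comp_apply]
  exact Real.exp_log hFpos
end
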